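/- Writing a_n := a_n(A_M), there exists a constant c₀ > 0, depending only on M (and on the kernels k, γ), such that for every real sequence (y_n)_{n∈ℤ} with Σ_{n∈ℤ} 2^{2n} a_n y_n² < ∞, setting ȳ := (Σ_{n∈ℤ} 2^{2n} a_n y_n)/(Σ_{n∈ℤ} 2^{2n} a_n), one has the weighted discrete Poincaré inequality Σ_{n∈ℤ} 2^{2n} a_n (y_n − ȳ)² ≤ c₀ · Σ_{n∈ℤ} 2^{2n} γ(2^{n+1}) a_{n+1} (y_{n+1} − y_n)². -/

import Mathlib

set_option maxHeartbeats 1000000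


open Filter Topology Asymptotics MeasureTheory

noncomputable section

/-- `ζ_{n,ρ} = ln 2 · k(2^{n+ρ}) / (2^{n+ρ} · γ(2^{n+ρ+1}))`. -/
def zeta (k γ : ℝ → ℝ) (ρ : ℝ) (n : ℤ) : ℝ :=
  Real.log 2 * k ((2:ℝ) ^ ((n:ℝ) + ρ)) / ((2:ℝ) ^ ((n:ℝ) + ρ) * γ ((2:ℝ) ^ ((n:ℝ) + ρ + 1)))

/-- `θ_{n,ρ} = 2 ζ_{n+1,ρ} / ζ_{n,ρ}`. -/
def thetaF (k γ : ℝ → ℝ) (ρ : ℝ) (n : ℤ) : ℝ :=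
  2 * zeta k γ ρ (n + 1) / zeta k γ ρ n

/-- `α_n(A,ρ) = exp(−A·2^n)·exp(−2^n·Σ_{j=n+1}^∞ 2^{−j} ln θ_{j−1,ρ})`
(the tail series is re-indexed by `j = n + 1 + m`, `m ∈ ℕ`). -/
def alphaF (k γ : ℝ → ℝ) (ρ A : ℝ) (n : ℤ) : ℝ :=
  Real.exp (-(A * (2:ℝ) ^ n)) *
    Real.exp (-((2:ℝ) ^ n *
      ∑' m : ℕ, (2:ℝ) ^ (-(n + 1 + (m:ℤ))) * Real.log (thetaF k γ ρ (n + (m:ℤ)))))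

/-- `a_n(A,ρ) = 2 ζ_{n,ρ}⁻¹ α_n(A,ρ)`. -/
def aF (k γ : ℝ → ℝ) (ρ A : ℝ) (n : ℤ) : ℝ := 2 * (zeta k γ ρ n)⁻¹ * alphaF k γ ρ A n

section helpers

variable (k γ : ℝ → ℝ)

lemma zeta_eq (n : ℤ) : zeta k γ 0 n
    = Real.log 2 * k ((2:ℝ) ^ n) / ((2:ℝ) ^ n * γ ((2:ℝ) ^ (n + 1))) := by
  have h1 : ((n:ℝ) + 0) = ((n:ℤ):ℝ) := by push_cast; ring
  have h2 : ((n:ℝ) + 0 + 1) = (((n+1:ℤ)):ℝ) := by push_cast; ring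
  rw [zeta, h2, h1, Real.rpow_intCast, Real.rpow_intCast]

lemma zeta_pos (hk_pos : ∀ ξ : ℝ, 0 ≤ ξ → 0 < k ξ) (hγ_pos : ∀ ξ : ℝ, 0 < ξ → 0 < γ ξ)
    (n : ℤ) : 0 < zeta k γ 0 n := by
  rw [zeta_eq]
  have h2 : (0:ℝ) < (2:ℝ) ^ n := zpow_pos (by norm_num) n
  have h3 : (0:ℝ) < (2:ℝ) ^ (n+1) := zpow_pos (by norm_num) _
  have := hk_pos _ h2.le
  have := hγ_pos _ h3
  positivity

lemma thetaF_eq (hk_pos : ∀ ξ : ℝ, 0 ≤ ξ → 0 < k ξ) (hγ_pos : ∀ ξ : ℝ, 0 < ξ → 0 < γ ξ)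
    (n : ℤ) : thetaF k γ 0 n
    = (k ((2:ℝ) ^ (n+1)) / k ((2:ℝ) ^ n)) * (γ ((2:ℝ) ^ (n+1)) / γ ((2:ℝ) ^ (n+2))) := by
  have h2 : ∀ m : ℤ, (0:ℝ) < (2:ℝ) ^ m := fun m => zpow_pos (by norm_num) m
  have hk1 := hk_pos _ (h2 n).le
  have hk2 := hk_pos _ (h2 (n+1)).le
  have hγ1 := hγ_pos _ (h2 (n+1))
  have hγ2 := hγ_pos _ (h2 (n+2))
  have hlog : (0:ℝ) < Real.log 2 := Real.log_pos (by norm_num)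
  rw [thetaF, zeta_eq, zeta_eq]
  have h1 : (n + 1 + 1 : ℤ) = n + 2 := by ring
  rw [h1]
  have hz : (2:ℝ) ^ (n+1) = 2 * (2:ℝ) ^ n := by
    rw [zpow_add₀ (by norm_num : (2:ℝ) ≠ 0)]; ring
  field_simp
  rw [hz]

end helpers

-- envelope for k
lemma k_envelope (α : ℝ) (hα : α ∈ Set.Ioo (0:ℝ) 1) (k : ℝ → ℝ)
    (hk_cont : ContinuousOn k (Set.Ici 0)) (hk_pos : ∀ ξ : ℝ, 0 ≤ ξ → 0 < k ξ)
    (hk_inf : Tendsto (fun ξ : ℝ => k ξ / ξ ^ (α + 1)) atTop (𝓝 1)) :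
    ∃ c C : ℝ, 0 < c ∧ ∀ ξ : ℝ, 0 ≤ ξ →
      c * max 1 (ξ ^ (α + 1)) ≤ k ξ ∧ k ξ ≤ C * max 1 (ξ ^ (α + 1)) := by
  have he : (0:ℝ) < α + 1 := by linarith [hα.1]
  have h12 : ∀ᶠ ξ in atTop, |k ξ / ξ ^ (α+1) - 1| < 1/2 := by
    have := hk_inf (Metric.ball_mem_nhds (1:ℝ) (by norm_num : (0:ℝ) < 1/2))
    simpa [Metric.mem_ball, Real.dist_eq] using this
  obtain ⟨X₀, hX₀⟩ := h12.exists_forall_of_atTop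
  set X := max X₀ 1 with hXdef
  have hX1 : (1:ℝ) ≤ X := le_max_right _ _
  have hXb : ∀ ξ : ℝ, X ≤ ξ → |k ξ / ξ ^ (α+1) - 1| < 1/2 :=
    fun ξ hξ => hX₀ ξ (le_trans (le_max_left _ _) hξ)
  -- compact part
  have hcomp : IsCompact (Set.Icc (0:ℝ) X) := isCompact_Icc
  have hne : (Set.Icc (0:ℝ) X).Nonempty := ⟨0, by constructor <;> [rfl; linarith]⟩
  have hsub : Set.Icc (0:ℝ) X ⊆ Set.Ici 0 := fun x hx => hx.1
  obtain ⟨ξm, hξm, hmin'⟩ := hcomp.exists_isMinOn hne (hk_cont.mono hsub)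
  have hmin : ∀ x ∈ Set.Icc (0:ℝ) X, k ξm ≤ k x := fun x hx => hmin' hx
  obtain ⟨ξM, hξM, hmax'⟩ := hcomp.exists_isMaxOn hne (hk_cont.mono hsub)
  have hmax : ∀ x ∈ Set.Icc (0:ℝ) X, k x ≤ k ξM := fun x hx => hmax' hx
  have hc₁ : 0 < k ξm := hk_pos _ hξm.1
  have hXpow : (1:ℝ) ≤ X ^ (α+1) := Real.one_le_rpow hX1 he.le
  refine ⟨min (k ξm / X ^ (α+1)) (1/2), max (k ξM) 2, ?_, ?_⟩
  · exact lt_min (div_pos hc₁ (by linarith)) (by norm_num)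
  intro ξ hξ
  rcases le_or_gt ξ X with hcase | hcase
  · -- ξ ∈ [0, X]
    have hmem : ξ ∈ Set.Icc (0:ℝ) X := ⟨hξ, hcase⟩
    have hmax1 : max 1 (ξ ^ (α+1)) ≤ X ^ (α+1) := by
      refine max_le hXpow ?_
      exact Real.rpow_le_rpow hξ hcase he.le
    constructor
    · calc min (k ξm / X ^ (α+1)) (1/2) * max 1 (ξ ^ (α+1))
          ≤ (k ξm / X ^ (α+1)) * (X ^ (α+1)) := by
            have h0 : (0:ℝ) ≤ k ξm / X ^ (α+1) := div_nonneg hc₁.le (by linarith)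
            exact mul_le_mul (min_le_left _ _) hmax1 (le_trans zero_le_one (le_max_left _ _)) h0
        _ = k ξm := by field_simp
        _ ≤ k ξ := hmin ξ hmem
    · calc k ξ ≤ k ξM := hmax ξ hmem
        _ ≤ max (k ξM) 2 * 1 := by
          rw [mul_one]; exact le_max_left _ _
        _ ≤ max (k ξM) 2 * max 1 (ξ ^ (α+1)) := by
            apply mul_le_mul_of_nonneg_left (le_max_left _ _)
            exact le_trans (by norm_num) (le_max_right _ 2)
  · -- ξ > X
    have hξ1 : (1:ℝ) ≤ ξ := le_trans hX1 hcase.le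
    have hpow1 : (1:ℝ) ≤ ξ ^ (α+1) := Real.one_le_rpow hξ1 he.le
    have hmax1 : max 1 (ξ ^ (α+1)) = ξ ^ (α+1) := max_eq_right hpow1
    have hb := hXb ξ hcase.le
    rw [abs_sub_lt_iff] at hb
    have hppos : (0:ℝ) < ξ ^ (α+1) := by linarith
    constructor
    · rw [hmax1]
      have : (1/2 : ℝ) * ξ ^ (α+1) ≤ k ξ := by
        have := hb.2
        have h' : 1 - 1/2 < k ξ / ξ ^ (α+1) := by linarith
        rw [lt_div_iff₀ hppos] at h'
        linarith
      calc min (k ξm / X ^ (α+1)) (1/2) * ξ ^ (α+1)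
          ≤ (1/2) * ξ ^ (α+1) := by
            apply mul_le_mul_of_nonneg_right (min_le_right _ _) hppos.le
        _ ≤ k ξ := this
    · rw [hmax1]
      have h' : k ξ / ξ ^ (α+1) < 1 + 1/2 := by linarith [hb.1]
      rw [div_lt_iff₀ hppos] at h'
      calc k ξ ≤ (3/2) * ξ ^ (α+1) := by linarith
        _ ≤ max (k ξM) 2 * ξ ^ (α+1) := by
            apply mul_le_mul_of_nonneg_right (le_trans (by norm_num) (le_max_right (k ξM) 2)) hppos.le


lemma γ_envelope (β βb γ₀ : ℝ) (hβ : β ∈ Set.Ioo (1:ℝ) 2) (hβb : 1 < βb) (hγ₀ : 0 < γ₀)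
    (γ : ℝ → ℝ)
    (hγ_cont : ContinuousOn γ (Set.Ioi 0)) (hγ_pos : ∀ ξ : ℝ, 0 < ξ → 0 < γ ξ)
    (hγ_inf : Tendsto (fun ξ : ℝ => γ ξ / ξ ^ β) atTop (𝓝 1))
    (hγ_0 : (fun ξ : ℝ => γ ξ - γ₀) =O[𝓝[>] 0] fun ξ : ℝ => ξ ^ βb) :
    ∃ c C : ℝ, 0 < c ∧ ∀ ξ : ℝ, 0 < ξ →
      c * max 1 (ξ ^ β) ≤ γ ξ ∧ γ ξ ≤ C * max 1 (ξ ^ β) := by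
  have hb : (0:ℝ) < β := by linarith [hβ.1]
  -- near-zero two-sided bound
  have hnear : ∀ᶠ ξ in 𝓝[>] (0:ℝ), |γ ξ - γ₀| ≤ γ₀ / 2 := by
    obtain ⟨C₀, hC₀⟩ := hγ_0.bound
    have htend : Tendsto (fun ξ : ℝ => C₀ * ‖ξ ^ βb‖) (𝓝[>] (0:ℝ)) (𝓝 0) := by
      have h1 : Tendsto (fun ξ : ℝ => ξ ^ βb) (𝓝[>] (0:ℝ)) (𝓝 0) := by
        have := (Real.continuousAt_rpow_const 0 βb (Or.inr (by linarith))).tendsto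
        rw [Real.zero_rpow (by linarith : βb ≠ 0)] at this
        exact this.mono_left nhdsWithin_le_nhds
      have := (h1.norm).const_mul C₀
      simpa using this
    have hev : ∀ᶠ ξ in 𝓝[>] (0:ℝ), C₀ * ‖ξ ^ βb‖ < γ₀ / 2 :=
      htend.eventually (Filter.Tendsto.eventually_lt_const (by linarith) tendsto_id) |>.mono (fun x h => h)
    filter_upwards [hC₀, hev] with ξ h1 h2
    calc |γ ξ - γ₀| = ‖γ ξ - γ₀‖ := rfl
      _ ≤ C₀ * ‖ξ ^ βb‖ := h1
      _ ≤ γ₀ / 2 := h2.le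
  rw [eventually_nhdsWithin_iff, Metric.eventually_nhds_iff] at hnear
  obtain ⟨ε, hε, hnear⟩ := hnear
  set δ := min (ε / 2) 1 with hδdef
  have hδ : 0 < δ := by positivity
  have hnear' : ∀ ξ : ℝ, 0 < ξ → ξ ≤ δ → γ₀ / 2 ≤ γ ξ ∧ γ ξ ≤ 3 * γ₀ / 2 := by
    intro ξ h1 h2
    have hd : dist ξ 0 < ε := by
      rw [Real.dist_eq, sub_zero, abs_of_pos h1]
      have := min_le_left (ε/2) 1
      rw [hδdef] at h2; linarith
    have := hnear hd h1
    rw [abs_le] at this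
    constructor <;> linarith [this.1, this.2]
  -- large-ξ bound
  have h12 : ∀ᶠ ξ in atTop, |γ ξ / ξ ^ β - 1| < 1/2 := by
    have := hγ_inf (Metric.ball_mem_nhds (1:ℝ) (by norm_num : (0:ℝ) < 1/2))
    simpa [Metric.mem_ball, Real.dist_eq] using this
  obtain ⟨X₀, hX₀⟩ := h12.exists_forall_of_atTop
  set X := max X₀ 1 with hXdef
  have hX1 : (1:ℝ) ≤ X := le_max_right _ _
  have hXb : ∀ ξ : ℝ, X ≤ ξ → |γ ξ / ξ ^ β - 1| < 1/2 :=
    fun ξ hξ => hX₀ ξ (le_trans (le_max_left _ _) hξ)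
  have hδX : δ ≤ X := le_trans (min_le_right _ _) hX1
  -- compact part on [δ, X]
  have hcomp : IsCompact (Set.Icc δ X) := isCompact_Icc
  have hne : (Set.Icc δ X).Nonempty := ⟨δ, by constructor <;> linarith⟩
  have hsub : Set.Icc δ X ⊆ Set.Ioi 0 := fun x hx => lt_of_lt_of_le hδ hx.1
  obtain ⟨ξm, hξm, hmin'⟩ := hcomp.exists_isMinOn hne (hγ_cont.mono hsub)
  have hmin : ∀ x ∈ Set.Icc δ X, γ ξm ≤ γ x := fun x hx => hmin' hx
  obtain ⟨ξM, hξM, hmax'⟩ := hcomp.exists_isMaxOn hne (hγ_cont.mono hsub)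
  have hmax : ∀ x ∈ Set.Icc δ X, γ x ≤ γ ξM := fun x hx => hmax' hx
  have hc₁ : 0 < γ ξm := hγ_pos _ (hsub hξm)
  have hXpow : (1:ℝ) ≤ X ^ β := Real.one_le_rpow hX1 hb.le
  have hXppos : (0:ℝ) < X ^ β := by linarith
  refine ⟨min (min (γ ξm) (γ₀/2) / X ^ β) (1/2), max (max (γ ξM) (3*γ₀/2)) 2, ?_, ?_⟩
  · refine lt_min (div_pos (lt_min hc₁ (by linarith)) hXppos) (by norm_num)
  intro ξ hξpos
  rcases le_or_gt ξ X with hcase | hcase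
  · -- ξ ∈ (0, X]
    have hlow : min (γ ξm) (γ₀/2) ≤ γ ξ := by
      rcases le_or_gt ξ δ with h | h
      · exact le_trans (min_le_right _ _) (hnear' ξ hξpos h).1
      · exact le_trans (min_le_left _ _) (hmin ξ ⟨h.le, hcase⟩)
    have hhigh : γ ξ ≤ max (γ ξM) (3*γ₀/2) := by
      rcases le_or_gt ξ δ with h | h
      · exact le_trans (hnear' ξ hξpos h).2 (le_max_right _ _)
      · exact le_trans (hmax ξ ⟨h.le, hcase⟩) (le_max_left _ _)
    have hmax1 : max 1 (ξ ^ β) ≤ X ^ β :=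
      max_le hXpow (Real.rpow_le_rpow hξpos.le hcase hb.le)
    constructor
    · calc min (min (γ ξm) (γ₀/2) / X ^ β) (1/2) * max 1 (ξ ^ β)
          ≤ (min (γ ξm) (γ₀/2) / X ^ β) * (X ^ β) := by
            have h0 : (0:ℝ) ≤ min (γ ξm) (γ₀/2) / X ^ β :=
              div_nonneg (le_min hc₁.le (by linarith)) hXppos.le
            exact mul_le_mul (min_le_left _ _) hmax1 (le_trans zero_le_one (le_max_left _ _)) h0
        _ = min (γ ξm) (γ₀/2) := by field_simp
        _ ≤ γ ξ := hlow
    · calc γ ξ ≤ max (γ ξM) (3*γ₀/2) := hhigh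
        _ ≤ max (max (γ ξM) (3*γ₀/2)) 2 * 1 := by rw [mul_one]; exact le_max_left _ _
        _ ≤ max (max (γ ξM) (3*γ₀/2)) 2 * max 1 (ξ ^ β) := by
            apply mul_le_mul_of_nonneg_left (le_max_left _ _)
            exact le_trans (by norm_num) (le_max_right _ 2)
  · -- ξ > X
    have hξ1 : (1:ℝ) ≤ ξ := le_trans hX1 hcase.le
    have hpow1 : (1:ℝ) ≤ ξ ^ β := Real.one_le_rpow hξ1 hb.le
    have hmax1 : max 1 (ξ ^ β) = ξ ^ β := max_eq_right hpow1
    have hbnd := hXb ξ hcase.le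
    rw [abs_sub_lt_iff] at hbnd
    have hppos : (0:ℝ) < ξ ^ β := by linarith
    constructor
    · rw [hmax1]
      have hky : (1/2 : ℝ) * ξ ^ β ≤ γ ξ := by
        have h' : 1 - 1/2 < γ ξ / ξ ^ β := by linarith [hbnd.2]
        rw [lt_div_iff₀ hppos] at h'
        linarith
      calc min (min (γ ξm) (γ₀/2) / X ^ β) (1/2) * ξ ^ β
          ≤ (1/2) * ξ ^ β := mul_le_mul_of_nonneg_right (min_le_right _ _) hppos.le
        _ ≤ γ ξ := hky
    · rw [hmax1]
      have h' : γ ξ / ξ ^ β < 1 + 1/2 := by linarith [hbnd.1]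
      rw [div_lt_iff₀ hppos] at h'
      calc γ ξ ≤ (3/2) * ξ ^ β := by linarith
        _ ≤ max (max (γ ξM) (3*γ₀/2)) 2 * ξ ^ β := by
            apply mul_le_mul_of_nonneg_right (le_trans (by norm_num) (le_max_right _ 2)) hppos.le


-- geometric sum bound, r > 1
lemma geo_aux (r : ℝ) (hr : 1 < r) (a : ℤ) :
    ∀ N : ℕ, (∑ i ∈ Finset.Icc a (a + (N:ℤ)), r ^ i) ≤ r ^ (a + (N:ℤ) + 1) / (r - 1) := by
  have hr0 : (0:ℝ) < r := by linarith
  have hr1 : (0:ℝ) < r - 1 := by linarith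
  intro N
  induction N with
  | zero =>
    simp only [Nat.cast_zero, add_zero, Finset.Icc_self, Finset.sum_singleton]
    rw [le_div_iff₀ hr1, zpow_add₀ (ne_of_gt hr0)]
    have h1 : (0:ℝ) < r ^ a := zpow_pos hr0 a
    simp only [zpow_one]
    nlinarith
  | succ N ih =>
    have hmem : (a + ((N:ℤ)+1)) ∉ Finset.Icc a (a + (N:ℤ)) := by
      simp [Finset.mem_Icc]
    have hset : Finset.Icc a (a + ((N:ℤ)+1)) = insert (a + ((N:ℤ)+1)) (Finset.Icc a (a + (N:ℤ))) := by
      ext i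
      simp only [Finset.mem_Icc, Finset.mem_insert]
      omega
    have hNc : ((N+1 : ℕ):ℤ) = (N:ℤ)+1 := by push_cast; ring
    rw [hNc, hset, Finset.sum_insert hmem]
    have h2 : r ^ (a + (N:ℤ) + 1) ≤ r ^ (a + ((N:ℤ)+1) + 1) / r := by
      rw [zpow_add₀ (ne_of_gt hr0) (a + ((N:ℤ)+1)) 1, zpow_one]
      rw [mul_div_assoc, div_self (ne_of_gt hr0), mul_one]
      have : a + (N:ℤ) + 1 = a + ((N:ℤ)+1) := by ring
      rw [this]
    calc r ^ (a + ((N:ℤ)+1)) + ∑ i ∈ Finset.Icc a (a + (N:ℤ)), r ^ i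
        ≤ r ^ (a + ((N:ℤ)+1)) + r ^ (a + (N:ℤ) + 1) / (r - 1) := by linarith
      _ ≤ r ^ (a + ((N:ℤ)+1) + 1) / (r - 1) := by
          have hx : r ^ (a + ((N:ℤ)+1) + 1) = r ^ (a + ((N:ℤ)+1)) * r := by
            rw [zpow_add₀ (ne_of_gt hr0), zpow_one]
          have h3 : a + (N:ℤ) + 1 = a + ((N:ℤ)+1) := by ring
          rw [h3, hx]
          rw [le_div_iff₀ hr1]
          field_simp
          ring_nf
          nlinarith [zpow_pos hr0 (a + ((N:ℤ)+1))]

lemma geo_gt_one (r : ℝ) (hr : 1 < r) (a b : ℤ) :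
    (∑ i ∈ Finset.Icc a b, r ^ i) ≤ r ^ (b + 1) / (r - 1) := by
  rcases le_or_gt a b with h | h
  · have : b = a + ((b - a).toNat : ℤ) := by omega
    rw [this]
    exact geo_aux r hr a _
  · rw [Finset.Icc_eq_empty (by omega)]
    simp only [Finset.sum_empty]
    exact div_nonneg (le_of_lt (zpow_pos (by linarith) _)) (by linarith)

lemma geo_lt_one (r : ℝ) (hr0 : 0 < r) (hr : r < 1) (a b : ℤ) :
    (∑ i ∈ Finset.Icc a b, r ^ i) ≤ r ^ a / (1 - r) := by
  have hs : 1 < r⁻¹ := (one_lt_inv₀ hr0).mpr hr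
  have key : (∑ i ∈ Finset.Icc a b, r ^ i) = ∑ j ∈ Finset.Icc (-b) (-a), r⁻¹ ^ j := by
    refine Finset.sum_nbij' (fun i => -i) (fun j => -j) ?_ ?_ ?_ ?_ ?_
    · intro i hi; simp only [Finset.mem_Icc] at *; omega
    · intro j hj; simp only [Finset.mem_Icc] at *; omega
    · intro i _; ring
    · intro j _; ring
    · intro i _
      rw [inv_zpow, ← zpow_neg]
      ring_nf
  rw [key]
  calc (∑ j ∈ Finset.Icc (-b) (-a), r⁻¹ ^ j) ≤ r⁻¹ ^ (-a + 1) / (r⁻¹ - 1) := geo_gt_one r⁻¹ hs _ _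
    _ = r ^ a / (1 - r) := by
        have h1 : r⁻¹ ^ (-a + 1) = r ^ (a - 1) := by
          rw [inv_zpow, ← zpow_neg]; congr 1; ring
        have h2 : r ^ (a:ℤ) = r ^ (a - 1) * r := by
          rw [← zpow_add_one₀ (ne_of_gt hr0)]; congr 1; ring
        have hd1 : r⁻¹ - 1 ≠ 0 := by
          have : (0:ℝ) < r⁻¹ - 1 := by linarith
          exact ne_of_gt this
        have hd2 : (1:ℝ) - r ≠ 0 := by
          have : (0:ℝ) < 1 - r := by linarith
          exact ne_of_gt this
        rw [h1, div_eq_div_iff hd1 hd2, h2]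
        field_simp

-- telescoping
lemma tele_aux (y : ℤ → ℝ) (a : ℤ) : ∀ N : ℕ,
    (∑ i ∈ Finset.Ico a (a + (N:ℤ)), (y (i+1) - y i)) = y (a + (N:ℤ)) - y a := by
  intro N
  induction N with
  | zero => simp
  | succ N ih =>
    have hNc : ((N+1 : ℕ):ℤ) = (N:ℤ)+1 := by push_cast; ring
    have hmem : a + (N:ℤ) ∉ Finset.Ico a (a + (N:ℤ)) := by simp
    have hset : Finset.Ico a (a + ((N:ℤ)+1)) = insert (a + (N:ℤ)) (Finset.Ico a (a + (N:ℤ))) := by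
      ext i; simp only [Finset.mem_Ico, Finset.mem_insert]; omega
    rw [hNc, hset, Finset.sum_insert hmem, ih]
    have : a + (N:ℤ) + 1 = a + ((N:ℤ)+1) := by ring
    rw [this]
    ring

lemma tele (y : ℤ → ℝ) (a b : ℤ) (hab : a ≤ b) :
    (∑ i ∈ Finset.Ico a b, (y (i+1) - y i)) = y b - y a := by
  have h : b = a + ((b - a).toNat : ℤ) := by omega
  rw [h]
  exact tele_aux y a _

-- triangle swap
lemma tri_swap (N : ℕ) (f g : ℤ → ℝ) :
    ∑ n ∈ Finset.Icc (-(N:ℤ)) (-1), f n * (∑ j ∈ Finset.Ico n 0, g j)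
    = ∑ j ∈ Finset.Icc (-(N:ℤ)) (-1), (∑ n ∈ Finset.Icc (-(N:ℤ)) j, f n) * g j := by
  simp_rw [Finset.mul_sum, Finset.sum_mul]
  rw [Finset.sum_sigma', Finset.sum_sigma']
  refine Finset.sum_nbij' (fun x => ⟨x.2, x.1⟩) (fun x => ⟨x.2, x.1⟩) ?_ ?_
    (fun _ _ => rfl) (fun _ _ => rfl) (fun _ _ => rfl)
  · intro x hx
    simp only [Finset.mem_sigma, Finset.mem_Icc, Finset.mem_Ico] at *
    omega
  · intro x hx
    simp only [Finset.mem_sigma, Finset.mem_Icc, Finset.mem_Ico] at *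
    omega


lemma two_zpow_pos (n : ℤ) : (0:ℝ) < (2:ℝ) ^ n := zpow_pos (by norm_num) n

lemma two_zpow_rpow (n : ℤ) (e : ℝ) : ((2:ℝ) ^ n) ^ e = (2:ℝ) ^ ((n:ℝ) * e) := by
  rw [← Real.rpow_intCast 2 n, ← Real.rpow_mul (by norm_num : (0:ℝ) ≤ 2)]

lemma two_rpow_le_two_rpow {x y : ℝ} (h : x ≤ y) : (2:ℝ) ^ x ≤ (2:ℝ) ^ y :=
  Real.rpow_le_rpow_of_exponent_le (by norm_num) h

lemma four_zpow_eq (n : ℤ) : (4:ℝ) ^ n = (2:ℝ) ^ (((2*n : ℤ)):ℝ) := by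
  rw [Real.rpow_intCast]
  rw [show (4:ℝ) = (2:ℝ)^(2:ℤ) by norm_num, ← zpow_mul]

lemma max1_small {e : ℝ} (he : 0 < e) (he2 : e ≤ 2) {n : ℤ} (hn : n ≤ 2) :
    max 1 (((2:ℝ) ^ n) ^ e) ≤ 16 := by
  refine max_le (by norm_num) ?_
  rw [two_zpow_rpow]
  have h4 : (16:ℝ) = (2:ℝ) ^ (4:ℝ) := by
    rw [show (4:ℝ) = ((4:ℕ):ℝ) by norm_num, Real.rpow_natCast]; norm_num
  rw [h4]
  apply two_rpow_le_two_rpow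
  have hn' : (n:ℝ) ≤ 2 := by exact_mod_cast hn
  rcases le_or_gt (n:ℝ) 0 with h | h
  · nlinarith
  · nlinarith

lemma max1_big_le {e : ℝ} (he : 0 < e) (he2 : e ≤ 2) {n : ℤ} (hn : 0 ≤ n) :
    max 1 (((2:ℝ) ^ n) ^ e) ≤ (4:ℝ) ^ n := by
  have hn' : (0:ℝ) ≤ (n:ℝ) := by exact_mod_cast hn
  refine max_le ?_ ?_
  · rw [four_zpow_eq, show ((1:ℝ)) = (2:ℝ)^(0:ℝ) by rw [Real.rpow_zero]]
    apply two_rpow_le_two_rpow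
    push_cast; linarith
  · rw [four_zpow_eq, two_zpow_rpow]
    apply two_rpow_le_two_rpow
    push_cast; nlinarith

lemma max1_lower_lin {n : ℤ} {e : ℝ} (hn : 0 ≤ n) (he : 1 ≤ e) :
    (2:ℝ) ^ n ≤ max 1 (((2:ℝ) ^ n) ^ e) := by
  have hn' : (0:ℝ) ≤ (n:ℝ) := by exact_mod_cast hn
  refine le_max_of_le_right ?_
  rw [two_zpow_rpow, ← Real.rpow_intCast 2 n]
  apply two_rpow_le_two_rpow
  nlinarith

lemma max1_dbl {e : ℝ} (he : 0 < e) (he2 : e ≤ 2) (n : ℤ) :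
    max 1 (((2:ℝ) ^ (n+1)) ^ e) ≤ 4 * max 1 (((2:ℝ) ^ n) ^ e) := by
  refine max_le ?_ ?_
  · have : (1:ℝ) ≤ max 1 (((2:ℝ) ^ n) ^ e) := le_max_left _ _
    linarith
  · have h1 : ((2:ℝ) ^ (n+1)) ^ e ≤ 4 * ((2:ℝ) ^ n) ^ e := by
      rw [two_zpow_rpow, two_zpow_rpow]
      have h4 : (4:ℝ) = (2:ℝ) ^ (2:ℝ) := by
        rw [show (2:ℝ) = ((2:ℕ):ℝ) by norm_num, Real.rpow_natCast]; norm_num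
      rw [h4, ← Real.rpow_add (by norm_num : (0:ℝ) < 2)]
      apply two_rpow_le_two_rpow
      push_cast; nlinarith
    have h2 : (0:ℝ) ≤ ((2:ℝ) ^ n) ^ e :=
      Real.rpow_nonneg (two_zpow_pos n).le e
    calc ((2:ℝ) ^ (n+1)) ^ e ≤ 4 * ((2:ℝ) ^ n) ^ e := h1
      _ ≤ 4 * max 1 (((2:ℝ) ^ n) ^ e) := by
          have := le_max_right (1:ℝ) (((2:ℝ) ^ n) ^ e); linarith

lemma max1_mono {e : ℝ} (he : 0 < e) (n : ℤ) :
    max 1 (((2:ℝ) ^ n) ^ e) ≤ max 1 (((2:ℝ) ^ (n+1)) ^ e) := by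
  apply max_le (le_max_left _ _)
  refine le_max_of_le_right ?_
  rw [two_zpow_rpow, two_zpow_rpow]
  apply two_rpow_le_two_rpow
  push_cast; nlinarith


section core

variable {α β : ℝ} {k γ : ℝ → ℝ} {ck Ck cγ Cγ : ℝ}

/-- Bounds on `θ_n` uniform in `n`. -/
lemma theta_bounds (hα : α ∈ Set.Ioo (0:ℝ) 1) (hβ : β ∈ Set.Ioo (1:ℝ) 2)
    (hk_pos : ∀ ξ : ℝ, 0 ≤ ξ → 0 < k ξ) (hγ_pos : ∀ ξ : ℝ, 0 < ξ → 0 < γ ξ)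
    (hck : 0 < ck) (hcγ : 0 < cγ)
    (hkenv : ∀ ξ:ℝ, 0 ≤ ξ → ck * max 1 (ξ^(α+1)) ≤ k ξ ∧ k ξ ≤ Ck * max 1 (ξ^(α+1)))
    (hγenv : ∀ ξ:ℝ, 0 < ξ → cγ * max 1 (ξ^β) ≤ γ ξ ∧ γ ξ ≤ Cγ * max 1 (ξ^β)) :
    ∃ cθ Cθ : ℝ, 0 < cθ ∧ 0 < Cθ ∧ ∀ n : ℤ,
      cθ ≤ thetaF k γ 0 n ∧ thetaF k γ 0 n ≤ Cθ := by
  have he1 : (0:ℝ) < α + 1 := by linarith [hα.1]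
  have he2 : α + 1 ≤ 2 := by linarith [hα.2]
  have hb1 : (0:ℝ) < β := by linarith [hβ.1]
  have hb2 : β ≤ 2 := le_of_lt hβ.2
  have hCk : 0 < Ck := by
    have h := (hkenv 1 (by norm_num)).2
    have h2 := hk_pos 1 (by norm_num)
    have h3 : max (1:ℝ) ((1:ℝ)^(α+1)) = 1 := by rw [Real.one_rpow]; simp
    rw [h3, mul_one] at h
    linarith
  have hCγ : 0 < Cγ := by
    have h := (hγenv 1 (by norm_num)).2
    have h2 := hγ_pos 1 (by norm_num)
    have h3 : max (1:ℝ) ((1:ℝ)^β) = 1 := by rw [Real.one_rpow]; simp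
    rw [h3, mul_one] at h
    linarith
  refine ⟨(ck/Ck) * (cγ/(4*Cγ)), (4*Ck/ck) * (Cγ/cγ), by positivity, by positivity, ?_⟩
  intro n
  have hKpos : ∀ m : ℤ, 0 < k ((2:ℝ)^m) := fun m => hk_pos _ (two_zpow_pos m).le
  have hGpos : ∀ m : ℤ, 0 < γ ((2:ℝ)^m) := fun m => hγ_pos _ (two_zpow_pos m)
  -- cross-multiplied ratio bounds
  have hKr_lo : ck * k ((2:ℝ)^n) ≤ Ck * k ((2:ℝ)^(n+1)) := by
    have h1 := (hkenv _ (two_zpow_pos (n+1)).le).1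
    have h2 := (hkenv _ (two_zpow_pos n).le).2
    have h3 := max1_mono he1 n
    calc ck * k ((2:ℝ)^n) ≤ ck * (Ck * max 1 (((2:ℝ)^n)^(α+1))) := by
          apply mul_le_mul_of_nonneg_left h2 hck.le
      _ = Ck * (ck * max 1 (((2:ℝ)^n)^(α+1))) := by ring
      _ ≤ Ck * (ck * max 1 (((2:ℝ)^(n+1))^(α+1))) := by
          apply mul_le_mul_of_nonneg_left (mul_le_mul_of_nonneg_left h3 hck.le) hCk.le
      _ ≤ Ck * k ((2:ℝ)^(n+1)) := mul_le_mul_of_nonneg_left h1 hCk.le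
  have hKr_up : ck * k ((2:ℝ)^(n+1)) ≤ 4 * Ck * k ((2:ℝ)^n) := by
    have h1 := (hkenv _ (two_zpow_pos (n+1)).le).2
    have h2 := (hkenv _ (two_zpow_pos n).le).1
    have h3 := max1_dbl he1 he2 n
    calc ck * k ((2:ℝ)^(n+1)) ≤ ck * (Ck * max 1 (((2:ℝ)^(n+1))^(α+1))) := by
          apply mul_le_mul_of_nonneg_left h1 hck.le
      _ ≤ ck * (Ck * (4 * max 1 (((2:ℝ)^n)^(α+1)))) := by
          apply mul_le_mul_of_nonneg_left (mul_le_mul_of_nonneg_left h3 hCk.le) hck.le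
      _ = 4 * Ck * (ck * max 1 (((2:ℝ)^n)^(α+1))) := by ring
      _ ≤ 4 * Ck * k ((2:ℝ)^n) := by
          apply mul_le_mul_of_nonneg_left h2; positivity
  have hGr_up : cγ * γ ((2:ℝ)^(n+2)) ≤ 4 * Cγ * γ ((2:ℝ)^(n+1)) := by
    have h1 := (hγenv _ (two_zpow_pos (n+2))).2
    have h2 := (hγenv _ (two_zpow_pos (n+1))).1
    have h3 := max1_dbl hb1 hb2 (n+1)
    have hn2 : (n:ℤ) + 1 + 1 = n + 2 := by ring
    rw [hn2] at h3
    calc cγ * γ ((2:ℝ)^(n+2)) ≤ cγ * (Cγ * max 1 (((2:ℝ)^(n+2))^β)) := by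
          apply mul_le_mul_of_nonneg_left h1 hcγ.le
      _ ≤ cγ * (Cγ * (4 * max 1 (((2:ℝ)^(n+1))^β))) := by
          apply mul_le_mul_of_nonneg_left (mul_le_mul_of_nonneg_left h3 hCγ.le) hcγ.le
      _ = 4 * Cγ * (cγ * max 1 (((2:ℝ)^(n+1))^β)) := by ring
      _ ≤ 4 * Cγ * γ ((2:ℝ)^(n+1)) := by
          apply mul_le_mul_of_nonneg_left h2; positivity
  have hGr_lo : cγ * γ ((2:ℝ)^(n+1)) ≤ Cγ * γ ((2:ℝ)^(n+2)) := by
    have h1 := (hγenv _ (two_zpow_pos (n+2))).1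
    have h2 := (hγenv _ (two_zpow_pos (n+1))).2
    have h3 := max1_mono hb1 (n+1)
    have hn2 : (n:ℤ) + 1 + 1 = n + 2 := by ring
    rw [hn2] at h3
    calc cγ * γ ((2:ℝ)^(n+1)) ≤ cγ * (Cγ * max 1 (((2:ℝ)^(n+1))^β)) := by
          apply mul_le_mul_of_nonneg_left h2 hcγ.le
      _ = Cγ * (cγ * max 1 (((2:ℝ)^(n+1))^β)) := by ring
      _ ≤ Cγ * (cγ * max 1 (((2:ℝ)^(n+2))^β)) := by
          apply mul_le_mul_of_nonneg_left (mul_le_mul_of_nonneg_left h3 hcγ.le) hCγ.le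
      _ ≤ Cγ * γ ((2:ℝ)^(n+2)) := mul_le_mul_of_nonneg_left h1 hCγ.le
  rw [thetaF_eq k γ hk_pos hγ_pos n]
  have p1 := hKpos n; have p2 := hKpos (n+1); have p3 := hGpos (n+1); have p4 := hGpos (n+2)
  constructor
  · have f1 : ck/Ck ≤ k ((2:ℝ)^(n+1)) / k ((2:ℝ)^n) := by
      rw [div_le_div_iff₀ hCk p1]; linarith
    have f2 : cγ/(4*Cγ) ≤ γ ((2:ℝ)^(n+1)) / γ ((2:ℝ)^(n+2)) := by
      rw [div_le_div_iff₀ (by positivity) p4]; linarith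
    have g1 : (0:ℝ) ≤ ck/Ck := by positivity
    have g2 : (0:ℝ) ≤ cγ/(4*Cγ) := by positivity
    exact mul_le_mul f1 f2 g2 (by positivity)
  · have f1 : k ((2:ℝ)^(n+1)) / k ((2:ℝ)^n) ≤ 4*Ck/ck := by
      rw [div_le_div_iff₀ p1 hck]; nlinarith
    have f2 : γ ((2:ℝ)^(n+1)) / γ ((2:ℝ)^(n+2)) ≤ Cγ/cγ := by
      rw [div_le_div_iff₀ p4 hcγ]; nlinarith
    have g1 : (0:ℝ) ≤ k ((2:ℝ)^(n+1)) / k ((2:ℝ)^n) := by positivity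
    exact mul_le_mul f1 f2 (by positivity) (by positivity)

/-- Two-sided bound for `alphaF` given uniform bounds on `log θ`. -/
lemma alphaF_bounds {L : ℝ} (hL0 : 0 ≤ L)
    (hL : ∀ n : ℤ, |Real.log (thetaF k γ 0 n)| ≤ L) (A : ℝ) (n : ℤ) :
    Real.exp (-(A * (2:ℝ)^n)) * Real.exp (-L) ≤ alphaF k γ 0 A n ∧
      alphaF k γ 0 A n ≤ Real.exp (-(A * (2:ℝ)^n)) * Real.exp L := by
  have hT : |(2:ℝ)^n * ∑' m : ℕ, (2:ℝ) ^ (-(n + 1 + (m:ℤ))) * Real.log (thetaF k γ 0 (n + (m:ℤ)))| ≤ L := by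
    have heq : (2:ℝ)^n * (∑' m : ℕ, (2:ℝ) ^ (-(n + 1 + (m:ℤ))) * Real.log (thetaF k γ 0 (n + (m:ℤ))))
        = ∑' m : ℕ, (1/2:ℝ)^(m+1) * Real.log (thetaF k γ 0 (n + (m:ℤ))) := by
      rw [← tsum_mul_left]
      refine tsum_congr (fun m => ?_)
      have hc : (2:ℝ)^n * (2:ℝ)^(-(n + 1 + (m:ℤ))) = (1/2:ℝ)^(m+1) := by
        rw [← zpow_add₀ (by norm_num : (2:ℝ) ≠ 0)]
        rw [show (n + -(n + 1 + (m:ℤ))) = -(((m+1 : ℕ)):ℤ) by push_cast; ring]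
        rw [zpow_neg, zpow_natCast, one_div, inv_pow]
      rw [← mul_assoc, hc]
    rw [heq]
    have hgeom : HasSum (fun m : ℕ => L * (1/2:ℝ)^(m+1)) L := by
      have h0 := hasSum_geometric_of_lt_one (by norm_num : (0:ℝ) ≤ 1/2) (by norm_num : (1/2:ℝ) < 1)
      have h1 := h0.mul_left (L/2)
      have h2 : (fun m : ℕ => L/2 * (1/2:ℝ)^m) = (fun m : ℕ => L * (1/2:ℝ)^(m+1)) := by
        funext m; rw [pow_succ]; ring
      rw [h2] at h1
      have h3 : L / 2 * (1 - 1/2:ℝ)⁻¹ = L := by norm_num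
      rw [h3] at h1
      exact h1
    rw [← Real.norm_eq_abs]
    refine tsum_of_norm_bounded hgeom ?_
    intro m
    rw [Real.norm_eq_abs, abs_mul, abs_of_nonneg (by positivity : (0:ℝ) ≤ (1/2:ℝ)^(m+1))]
    rw [mul_comm (L) _]
    apply mul_le_mul_of_nonneg_left (hL _) (by positivity)
  rw [abs_le] at hT
  unfold alphaF
  constructor
  · apply mul_le_mul_of_nonneg_left _ (Real.exp_pos _).le
    rw [Real.exp_le_exp]
    linarith [hT.2]
  · apply mul_le_mul_of_nonneg_left _ (Real.exp_pos _).le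
    rw [Real.exp_le_exp]
    linarith [hT.1]

end core


lemma exp_two_pow_tendsto {A : ℝ} (hA : 0 < A) :
    Tendsto (fun m : ℕ => Real.exp (-(A * 2^m))) atTop (𝓝 0) := by
  have h1 : ∀ m : ℕ, Real.exp (-(A * 2^m)) ≤ (Real.exp (-A))^m := by
    intro m
    rw [← Real.exp_nat_mul]
    apply Real.exp_le_exp.mpr
    have h2 : (m:ℝ) ≤ 2^m := by
      have := @Nat.lt_two_pow_self m
      have : (m:ℝ) < (2:ℝ)^m := by exact_mod_cast this
      linarith
    nlinarith
  have h2 : Tendsto (fun m : ℕ => (Real.exp (-A))^m) atTop (𝓝 0) :=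
    tendsto_pow_atTop_nhds_zero_of_lt_one (Real.exp_nonneg _)
      (by rw [Real.exp_lt_one_iff]; linarith)
  refine tendsto_of_tendsto_of_tendsto_of_le_of_le tendsto_const_nhds h2
    (fun m => (Real.exp_pos _).le) h1

lemma weight_pack (α β : ℝ) (hα : α ∈ Set.Ioo (0:ℝ) 1) (hβ : β ∈ Set.Ioo (1:ℝ) 2)
    (k γ : ℝ → ℝ) (hk_pos : ∀ ξ : ℝ, 0 ≤ ξ → 0 < k ξ) (hγ_pos : ∀ ξ : ℝ, 0 < ξ → 0 < γ ξ)
    (ck Ck cγ Cγ : ℝ) (hck : 0 < ck) (hcγ : 0 < cγ)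
    (hkenv : ∀ ξ:ℝ, 0 ≤ ξ → ck * max 1 (ξ^(α+1)) ≤ k ξ ∧ k ξ ≤ Ck * max 1 (ξ^(α+1)))
    (hγenv : ∀ ξ:ℝ, 0 < ξ → cγ * max 1 (ξ^β) ≤ γ ξ ∧ γ ξ ≤ Cγ * max 1 (ξ^β))
    (A : ℝ) (hA : 0 < A) :
    ∃ Cw cv : ℝ, 0 < Cw ∧ 0 < cv ∧
      (∀ n : ℤ, n ≤ 0 → (2:ℝ)^(2*n) * aF k γ 0 A n ≤ Cw * 8^n) ∧
      (∀ n : ℤ, n ≤ -1 → cv * 8^n ≤ (2:ℝ)^(2*n) * γ ((2:ℝ)^(n+1)) * aF k γ 0 A (n+1)) ∧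
      Summable (fun n : ℤ => (2:ℝ)^(2*n) * aF k γ 0 A n) ∧
      (∃ J₀ : ℕ, ∀ j : ℤ, (J₀:ℤ) ≤ j →
        (2:ℝ)^(2*(j+1)) * γ ((2:ℝ)^(j+1+1)) * aF k γ 0 A (j+1+1) ≤
          (1/2) * ((2:ℝ)^(2*j) * γ ((2:ℝ)^(j+1)) * aF k γ 0 A (j+1))) ∧
      Summable (fun n : ℤ => if 1 ≤ n then (γ ((2:ℝ)^n))⁻¹ else 0) := by
  have he1 : (0:ℝ) < α + 1 := by linarith [hα.1]
  have he2 : α + 1 ≤ 2 := by linarith [hα.2]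
  have hb1 : (0:ℝ) < β := by linarith [hβ.1]
  have hb2 : β ≤ 2 := le_of_lt hβ.2
  have hlog2 : (0:ℝ) < Real.log 2 := Real.log_pos (by norm_num)
  have hKpos : ∀ m : ℤ, 0 < k ((2:ℝ)^m) := fun m => hk_pos _ (two_zpow_pos m).le
  have hGpos : ∀ m : ℤ, 0 < γ ((2:ℝ)^m) := fun m => hγ_pos _ (two_zpow_pos m)
  have hZpos : ∀ m : ℤ, 0 < zeta k γ 0 m := zeta_pos k γ hk_pos hγ_pos
  have hαpos : ∀ m : ℤ, 0 < alphaF k γ 0 A m :=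
    fun m => mul_pos (Real.exp_pos _) (Real.exp_pos _)
  have haFpos : ∀ m : ℤ, 0 < aF k γ 0 A m :=
    fun m => by
      unfold aF
      have := hZpos m
      have := hαpos m
      positivity
  -- θ and log θ bounds
  obtain ⟨cθ, Cθ, hcθ, hCθ, hθ⟩ := theta_bounds hα hβ hk_pos hγ_pos hck hcγ hkenv hγenv
  set L : ℝ := max |Real.log cθ| |Real.log Cθ| with hLdef
  have hL0 : 0 ≤ L := le_trans (abs_nonneg _) (le_max_left _ _)
  have hlogθ : ∀ n : ℤ, |Real.log (thetaF k γ 0 n)| ≤ L := by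
    intro n
    have h1 := (hθ n).1
    have h2 := (hθ n).2
    have hθpos : 0 < thetaF k γ 0 n := lt_of_lt_of_le hcθ h1
    rw [abs_le]
    constructor
    · have := Real.log_le_log hcθ h1
      calc -L ≤ -|Real.log cθ| := by
            have := le_max_left |Real.log cθ| |Real.log Cθ|; linarith
        _ ≤ Real.log cθ := neg_abs_le _
        _ ≤ Real.log (thetaF k γ 0 n) := this
    · calc Real.log (thetaF k γ 0 n) ≤ Real.log Cθ := Real.log_le_log hθpos h2
        _ ≤ |Real.log Cθ| := le_abs_self _
        _ ≤ L := le_max_right _ _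
  have hαb : ∀ n : ℤ, Real.exp (-(A * (2:ℝ)^n)) * Real.exp (-L) ≤ alphaF k γ 0 A n ∧
      alphaF k γ 0 A n ≤ Real.exp (-(A * (2:ℝ)^n)) * Real.exp L :=
    alphaF_bounds hL0 hlogθ A
  have hαup1 : ∀ n : ℤ, alphaF k γ 0 A n ≤ Real.exp L := by
    intro n
    have h := (hαb n).2
    have h2 : Real.exp (-(A * (2:ℝ)^n)) ≤ 1 := by
      rw [Real.exp_le_one_iff]
      have := two_zpow_pos n
      nlinarith
    calc alphaF k γ 0 A n ≤ Real.exp (-(A * (2:ℝ)^n)) * Real.exp L := h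
      _ ≤ 1 * Real.exp L := by
          apply mul_le_mul_of_nonneg_right h2 (Real.exp_pos _).le
      _ = Real.exp L := one_mul _
  -- Z bounds
  set cZ : ℝ := Real.log 2 * ck / (16 * Cγ) with hcZdef
  set CZ : ℝ := Real.log 2 * (16 * Ck) / cγ with hCZdef
  have hCk : 0 < Ck := by
    have h := (hkenv 1 (by norm_num)).2
    have h2 := hk_pos 1 (by norm_num)
    have h3 : max (1:ℝ) ((1:ℝ)^(α+1)) = 1 := by rw [Real.one_rpow]; simp
    rw [h3, mul_one] at h
    linarith
  have hCγ : 0 < Cγ := by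
    have h := (hγenv 1 (by norm_num)).2
    have h2 := hγ_pos 1 (by norm_num)
    have h3 : max (1:ℝ) ((1:ℝ)^β) = 1 := by rw [Real.one_rpow]; simp
    rw [h3, mul_one] at h
    linarith
  have hcZ : 0 < cZ := by rw [hcZdef]; positivity
  have hCZ : 0 < CZ := by rw [hCZdef]; positivity
  -- basic K, G bounds
  have hK_lo : ∀ m : ℤ, ck ≤ k ((2:ℝ)^m) := by
    intro m
    have h := (hkenv _ (two_zpow_pos m).le).1
    have h2 : (1:ℝ) ≤ max 1 (((2:ℝ)^m)^(α+1)) := le_max_left _ _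
    nlinarith
  have hG_lo : ∀ m : ℤ, cγ ≤ γ ((2:ℝ)^m) := by
    intro m
    have h := (hγenv _ (two_zpow_pos m)).1
    have h2 : (1:ℝ) ≤ max 1 (((2:ℝ)^m)^β) := le_max_left _ _
    nlinarith
  have hK_small : ∀ m : ℤ, m ≤ 2 → k ((2:ℝ)^m) ≤ 16 * Ck := by
    intro m hm
    have h := (hkenv _ (two_zpow_pos m).le).2
    have h2 := max1_small he1 he2 hm
    nlinarith
  have hG_small : ∀ m : ℤ, m ≤ 2 → γ ((2:ℝ)^m) ≤ 16 * Cγ := by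
    intro m hm
    have h := (hγenv _ (two_zpow_pos m)).2
    have h2 := max1_small hb1 hb2 hm
    nlinarith
  have hG_big : ∀ m : ℤ, 0 ≤ m → γ ((2:ℝ)^m) ≤ Cγ * (4:ℝ)^m := by
    intro m hm
    have h := (hγenv _ (two_zpow_pos m)).2
    have h2 := max1_big_le hb1 hb2 hm
    nlinarith
  have hG_lin : ∀ m : ℤ, 0 ≤ m → cγ * (2:ℝ)^m ≤ γ ((2:ℝ)^m) := by
    intro m hm
    have h := (hγenv _ (two_zpow_pos m)).1
    have h2 := max1_lower_lin hm (le_of_lt hβ.1)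
    nlinarith
  have hG_dbl : ∀ m : ℤ, cγ * γ ((2:ℝ)^(m+1)) ≤ 4 * Cγ * γ ((2:ℝ)^m) := by
    intro m
    have h1 := (hγenv _ (two_zpow_pos (m+1))).2
    have h2 := (hγenv _ (two_zpow_pos m)).1
    have h3 := max1_dbl hb1 hb2 m
    calc cγ * γ ((2:ℝ)^(m+1)) ≤ cγ * (Cγ * max 1 (((2:ℝ)^(m+1))^β)) :=
          mul_le_mul_of_nonneg_left h1 hcγ.le
      _ ≤ cγ * (Cγ * (4 * max 1 (((2:ℝ)^m)^β))) :=
          mul_le_mul_of_nonneg_left (mul_le_mul_of_nonneg_left h3 hCγ.le) hcγ.le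
      _ = 4 * Cγ * (cγ * max 1 (((2:ℝ)^m)^β)) := by ring
      _ ≤ 4 * Cγ * γ ((2:ℝ)^m) := by
          apply mul_le_mul_of_nonneg_left h2; positivity
  -- Z1 : two-sided bound for n ≤ 1
  have hZ1 : ∀ n : ℤ, n ≤ 1 → cZ * ((2:ℝ)^n)⁻¹ ≤ zeta k γ 0 n ∧
      zeta k γ 0 n ≤ CZ * ((2:ℝ)^n)⁻¹ := by
    intro n hn
    have hp := two_zpow_pos n
    have hKl := hK_lo n
    have hKu := hK_small n (by omega)
    have hGl := hG_lo (n+1)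
    have hGu := hG_small (n+1) (by omega)
    rw [zeta_eq]
    have hGp := hGpos (n+1)
    have hKp := hKpos n
    constructor
    · have hlhs : cZ * ((2:ℝ)^n)⁻¹ = Real.log 2 * ck / (16 * Cγ * (2:ℝ)^n) := by
        rw [hcZdef]; field_simp
      rw [hlhs, div_le_div_iff₀ (by positivity) (by positivity)]
      have key : ck * γ ((2:ℝ)^(n+1)) ≤ k ((2:ℝ)^n) * (16 * Cγ) := by nlinarith
      linarith [mul_le_mul_of_nonneg_left key (mul_pos hlog2 hp).le]
    · have hrhs : CZ * ((2:ℝ)^n)⁻¹ = Real.log 2 * (16 * Ck) / (cγ * (2:ℝ)^n) := by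
        rw [hCZdef]; field_simp
      rw [hrhs, div_le_div_iff₀ (by positivity) (by positivity)]
      have key : k ((2:ℝ)^n) * cγ ≤ 16 * Ck * γ ((2:ℝ)^(n+1)) := by nlinarith
      linarith [mul_le_mul_of_nonneg_left key (mul_pos hlog2 hp).le]
  -- Z2 : inverse bound for n ≥ 0
  set CZi : ℝ := 4 * Cγ / (Real.log 2 * ck) with hCZidef
  have hCZi : 0 < CZi := by rw [hCZidef]; positivity
  have hZ2 : ∀ n : ℤ, 0 ≤ n → (zeta k γ 0 n)⁻¹ ≤ CZi * 8^n := by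
    intro n hn
    have hp := two_zpow_pos n
    have hGp := hGpos (n+1)
    have hKp := hKpos n
    have h4p : (0:ℝ) < (4:ℝ)^(n+1) := zpow_pos (by norm_num) _
    have h8p : (0:ℝ) < (8:ℝ)^n := zpow_pos (by norm_num) _
    have hZlo : Real.log 2 * ck / ((2:ℝ)^n * (Cγ * (4:ℝ)^(n+1))) ≤ zeta k γ 0 n := by
      rw [zeta_eq, div_le_div_iff₀ (by positivity) (by positivity)]
      have hGu := hG_big (n+1) (by omega)
      have hKl := hK_lo n
      have key : ck * γ ((2:ℝ)^(n+1)) ≤ k ((2:ℝ)^n) * (Cγ * (4:ℝ)^(n+1)) := by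
        nlinarith
      linarith [mul_le_mul_of_nonneg_left key (mul_pos hlog2 hp).le]
    have h1 : (zeta k γ 0 n)⁻¹ ≤ (Real.log 2 * ck / ((2:ℝ)^n * (Cγ * (4:ℝ)^(n+1))))⁻¹ := by
      apply inv_anti₀ (by positivity) hZlo
    have h2 : (Real.log 2 * ck / ((2:ℝ)^n * (Cγ * (4:ℝ)^(n+1))))⁻¹ = CZi * 8^n := by
      rw [inv_div, hCZidef]
      have h8 : (2:ℝ)^n * (4:ℝ)^(n+1) = 4 * (8:ℝ)^n := by
        rw [zpow_add_one₀ (by norm_num : (4:ℝ) ≠ 0),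
          show ((8:ℝ)) = 2*4 by norm_num, mul_zpow]
        ring
      rw [div_mul_eq_mul_div]
      congr 1
      linear_combination Cγ * h8
    rw [h2] at h1
    exact h1
  -- Z ratio
  have hZr : ∀ n : ℤ, cθ / 2 * zeta k γ 0 n ≤ zeta k γ 0 (n+1) := by
    intro n
    have h := (hθ n).1
    rw [thetaF] at h
    rw [le_div_iff₀ (hZpos n)] at h
    linarith
  -- ==== conclusions ====
  set Cw : ℝ := 2 * Real.exp L / cZ with hCwdef
  set cv : ℝ := 4 * cγ * Real.exp (-A) * Real.exp (-L) / CZ with hcvdef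
  have hCw : 0 < Cw := by rw [hCwdef]; positivity
  have hcv : 0 < cv := by rw [hcvdef]; positivity
  have h2ne : (2:ℝ) ≠ 0 := by norm_num
  have h8split : ∀ n : ℤ, (8:ℝ)^n = (2:ℝ)^(2*n) * (2:ℝ)^n := by
    intro n
    rw [← zpow_add₀ h2ne, show (2*n+n) = 3*n by ring, zpow_mul]
    norm_num
  have h32split : ∀ n : ℤ, (32:ℝ)^n = (2:ℝ)^(2*n) * (8:ℝ)^n := by
    intro n
    rw [show ((32:ℝ)) = 4*8 by norm_num, mul_zpow]
    congr 1
    rw [zpow_mul]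
    norm_num
  -- W upper bound for n ≤ 0
  have hWneg : ∀ n : ℤ, n ≤ 0 → (2:ℝ)^(2*n) * aF k γ 0 A n ≤ Cw * 8^n := by
    intro n hn
    have hp := two_zpow_pos n
    have hp2 := two_zpow_pos (2*n)
    have hZi : (zeta k γ 0 n)⁻¹ ≤ cZ⁻¹ * (2:ℝ)^n := by
      have h := (hZ1 n (by omega)).1
      have := inv_anti₀ (by positivity : (0:ℝ) < cZ * ((2:ℝ)^n)⁻¹) h
      rwa [mul_inv, inv_inv] at this
    have hstep : aF k γ 0 A n ≤ 2 * (cZ⁻¹ * (2:ℝ)^n) * Real.exp L := by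
      unfold aF
      apply mul_le_mul (by linarith [hZi] : 2 * (zeta k γ 0 n)⁻¹ ≤ 2 * (cZ⁻¹ * (2:ℝ)^n))
        (hαup1 n) (hαpos n).le (by positivity)
    calc (2:ℝ)^(2*n) * aF k γ 0 A n ≤ (2:ℝ)^(2*n) * (2 * (cZ⁻¹ * (2:ℝ)^n) * Real.exp L) :=
          mul_le_mul_of_nonneg_left hstep hp2.le
      _ = Cw * 8^n := by
          rw [h8split n, hCwdef, div_eq_mul_inv]
          ring
  -- V lower bound for n ≤ -1
  have hVneg : ∀ n : ℤ, n ≤ -1 →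
      cv * 8^n ≤ (2:ℝ)^(2*n) * γ ((2:ℝ)^(n+1)) * aF k γ 0 A (n+1) := by
    intro n hn
    have hp2 := two_zpow_pos (2*n)
    have hpn1 := two_zpow_pos (n+1)
    have hZi : CZ⁻¹ * (2:ℝ)^(n+1) ≤ (zeta k γ 0 (n+1))⁻¹ := by
      have h := (hZ1 (n+1) (by omega)).2
      have := inv_anti₀ (hZpos (n+1)) h
      rwa [mul_inv, inv_inv] at this
    have hα1 : Real.exp (-A) * Real.exp (-L) ≤ alphaF k γ 0 A (n+1) := by
      have h := (hαb (n+1)).1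
      have hle1 : (2:ℝ)^(n+1) ≤ 1 := by
        have : (2:ℝ)^(n+1) ≤ (2:ℝ)^(0:ℤ) :=
          zpow_le_zpow_right₀ (by norm_num : (1:ℝ) ≤ 2) (by omega)
        simpa using this
      have hexp : Real.exp (-A) ≤ Real.exp (-(A * (2:ℝ)^(n+1))) := by
        apply Real.exp_le_exp.mpr
        nlinarith
      calc Real.exp (-A) * Real.exp (-L)
          ≤ Real.exp (-(A * (2:ℝ)^(n+1))) * Real.exp (-L) :=
            mul_le_mul_of_nonneg_right hexp (Real.exp_pos _).le
        _ ≤ alphaF k γ 0 A (n+1) := h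
    have hGl := hG_lo (n+1)
    have hstep : 2 * (CZ⁻¹ * (2:ℝ)^(n+1)) * (Real.exp (-A) * Real.exp (-L))
        ≤ aF k γ 0 A (n+1) := by
      unfold aF
      apply mul_le_mul (by linarith [hZi] : 2 * (CZ⁻¹ * (2:ℝ)^(n+1)) ≤ 2 * (zeta k γ 0 (n+1))⁻¹)
        hα1 (by positivity) (by have := hZpos (n+1); positivity)
    calc cv * 8^n = (2:ℝ)^(2*n) * cγ *
          (2 * (CZ⁻¹ * (2:ℝ)^(n+1)) * (Real.exp (-A) * Real.exp (-L))) := by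
          rw [h8split n, hcvdef, zpow_add_one₀ h2ne, div_eq_mul_inv]
          ring
      _ ≤ (2:ℝ)^(2*n) * γ ((2:ℝ)^(n+1)) *
          (2 * (CZ⁻¹ * (2:ℝ)^(n+1)) * (Real.exp (-A) * Real.exp (-L))) := by
          apply mul_le_mul_of_nonneg_right
            (mul_le_mul_of_nonneg_left hGl hp2.le) (by positivity)
      _ ≤ (2:ℝ)^(2*n) * γ ((2:ℝ)^(n+1)) * aF k γ 0 A (n+1) := by
          apply mul_le_mul_of_nonneg_left hstep
          have := hGpos (n+1)
          positivity
  -- W upper bound for n ≥ 0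
  set C₂ : ℝ := 2 * Real.exp L * CZi with hC₂def
  have hC₂ : 0 < C₂ := by rw [hC₂def]; positivity
  have hWposb : ∀ n : ℤ, 0 ≤ n →
      (2:ℝ)^(2*n) * aF k γ 0 A n ≤ C₂ * 32^n * Real.exp (-(A * (2:ℝ)^n)) := by
    intro n hn
    have hp2 := two_zpow_pos (2*n)
    have h8p : (0:ℝ) < (8:ℝ)^n := zpow_pos (by norm_num) _
    have hstep : aF k γ 0 A n ≤ 2 * (CZi * 8^n) * (Real.exp (-(A * (2:ℝ)^n)) * Real.exp L) := by
      unfold aF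
      apply mul_le_mul
        (by linarith [hZ2 n hn] : 2 * (zeta k γ 0 n)⁻¹ ≤ 2 * (CZi * 8^n))
        (hαb n).2 (hαpos n).le (by positivity)
    calc (2:ℝ)^(2*n) * aF k γ 0 A n
        ≤ (2:ℝ)^(2*n) * (2 * (CZi * 8^n) * (Real.exp (-(A * (2:ℝ)^n)) * Real.exp L)) :=
          mul_le_mul_of_nonneg_left hstep hp2.le
      _ = C₂ * 32^n * Real.exp (-(A * (2:ℝ)^n)) := by
          rw [h32split n, hC₂def]
          ring
  -- Summability of W
  have hWsum : Summable (fun n : ℤ => (2:ℝ)^(2*n) * aF k γ 0 A n) := by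
    apply Summable.of_nat_of_neg
    · -- positive side
      have hg : Summable (fun m : ℕ => C₂ * 32^m * Real.exp (-(A * 2^m))) := by
        apply summable_of_ratio_norm_eventually_le (by norm_num : (1/2:ℝ) < 1)
        have hev := (exp_two_pow_tendsto hA).eventually_lt_const
          (by positivity : (0:ℝ) < 1/64)
        filter_upwards [hev] with m hm
        have he1 : (0:ℝ) < Real.exp (-(A * 2^m)) := Real.exp_pos _
        have he2 : Real.exp (-(A * 2^(m+1))) = Real.exp (-(A * 2^m)) * Real.exp (-(A * 2^m)) := by
          rw [← Real.exp_add]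
          congr 1
          rw [pow_succ]
          ring
        rw [Real.norm_eq_abs, Real.norm_eq_abs, abs_of_pos (by positivity), abs_of_pos (by positivity)]
        rw [he2]
        have h32 : (32:ℝ)^(m+1) = 32 * 32^m := by rw [pow_succ]; ring
        rw [h32]
        calc C₂ * (32 * 32^m) * (Real.exp (-(A * 2^m)) * Real.exp (-(A * 2^m)))
            ≤ C₂ * (32 * 32^m) * ((1/64) * Real.exp (-(A * 2^m))) := by
              apply mul_le_mul_of_nonneg_left
                (mul_le_mul_of_nonneg_right hm.le he1.le) (by positivity)
          _ = 1/2 * (C₂ * 32^m * Real.exp (-(A * 2^m))) := by ring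
      apply hg.of_nonneg_of_le
        (fun m => by
          have := haFpos ((m:ℤ))
          positivity)
      intro m
      have h := hWposb (m:ℤ) (by positivity)
      have e1 : ((32:ℝ))^((m:ℤ)) = (32:ℝ)^m := zpow_natCast _ _
      have e2 : ((2:ℝ))^((m:ℤ)) = (2:ℝ)^m := zpow_natCast _ _
      rw [e1, e2] at h
      exact h
    · -- negative side
      have hg : Summable (fun m : ℕ => Cw * (1/8:ℝ)^m) := by
        apply Summable.mul_left
        exact summable_geometric_of_lt_one (by norm_num) (by norm_num)
      apply hg.of_nonneg_of_le
        (fun m => by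
          have := haFpos (-(m:ℤ))
          positivity)
      intro m
      have h := hWneg (-(m:ℤ)) (by omega)
      have e1 : ((8:ℝ))^(-(m:ℤ)) = (1/8:ℝ)^m := by
        rw [zpow_neg, zpow_natCast, one_div, inv_pow]
      rw [e1] at h
      exact h
  -- geometric decay of V for large j
  have hVdec : ∃ J₀ : ℕ, ∀ j : ℤ, (J₀:ℤ) ≤ j →
      (2:ℝ)^(2*(j+1)) * γ ((2:ℝ)^(j+1+1)) * aF k γ 0 A (j+1+1) ≤
        (1/2) * ((2:ℝ)^(2*j) * γ ((2:ℝ)^(j+1)) * aF k γ 0 A (j+1)) := by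
    set CR : ℝ := 4 * (4*Cγ/cγ) * (2/cθ) * (Real.exp L * Real.exp L) with hCRdef
    have hCR : 0 < CR := by rw [hCRdef]; positivity
    obtain ⟨J₀, hJ₀⟩ := ((exp_two_pow_tendsto hA).eventually_lt_const
      (by positivity : (0:ℝ) < 1/(2*CR))).exists_forall_of_atTop
    refine ⟨J₀ + 1, ?_⟩
    intro j hj
    have hexp_small : CR * Real.exp (-(A * (2:ℝ)^(j+1))) ≤ 1/2 := by
      have h1 : Real.exp (-(A * (2:ℝ)^(j+1))) ≤ Real.exp (-(A * 2^(J₀+1))) := by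
        apply Real.exp_le_exp.mpr
        have h2 : (2:ℝ)^((J₀+1 : ℕ):ℤ) ≤ (2:ℝ)^(j+1) :=
          zpow_le_zpow_right₀ (by norm_num : (1:ℝ) ≤ 2) (by omega)
        rw [zpow_natCast] at h2
        nlinarith
      have h3 := hJ₀ (J₀+1) (by omega)
      calc CR * Real.exp (-(A * (2:ℝ)^(j+1))) ≤ CR * Real.exp (-(A * 2^(J₀+1))) :=
            mul_le_mul_of_nonneg_left h1 hCR.le
        _ ≤ CR * (1/(2*CR)) := mul_le_mul_of_nonneg_left h3.le hCR.le
        _ = 1/2 := by field_simp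
    -- component bounds
    have hGd : γ ((2:ℝ)^(j+1+1)) ≤ (4*Cγ/cγ) * γ ((2:ℝ)^(j+1)) := by
      have h := hG_dbl (j+1)
      have := hGpos (j+1+1)
      have := hGpos (j+1)
      rw [div_mul_eq_mul_div, le_div_iff₀ hcγ]
      nlinarith
    have hZd : (zeta k γ 0 (j+1+1))⁻¹ ≤ (2/cθ) * (zeta k γ 0 (j+1))⁻¹ := by
      have h := hZr (j+1)
      have h1 := hZpos (j+1)
      have hpos : 0 < cθ/2 * zeta k γ 0 (j+1) := by positivity
      have h2 := inv_anti₀ hpos h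
      rwa [mul_inv, inv_div] at h2
    have hαd : alphaF k γ 0 A (j+1+1) ≤
        (Real.exp L * Real.exp L) * Real.exp (-(A * (2:ℝ)^(j+1))) * alphaF k γ 0 A (j+1) := by
      have h1 := (hαb (j+1+1)).2
      have h2 := (hαb (j+1)).1
      have he : Real.exp (-(A * (2:ℝ)^(j+1+1))) =
          Real.exp (-(A * (2:ℝ)^(j+1))) * Real.exp (-(A * (2:ℝ)^(j+1))) := by
        rw [← Real.exp_add]
        congr 1
        rw [zpow_add_one₀ h2ne]
        ring
      have h3 : Real.exp (-(A * (2:ℝ)^(j+1))) ≤ Real.exp L * alphaF k γ 0 A (j+1) := by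
        have h4 := mul_le_mul_of_nonneg_left h2 (Real.exp_pos L).le
        have heq : Real.exp L * (Real.exp (-(A * (2:ℝ)^(j+1))) * Real.exp (-L))
            = Real.exp (-(A * (2:ℝ)^(j+1))) := by
          have hone : Real.exp L * Real.exp (-L) = 1 := by
            rw [← Real.exp_add]; simp
          calc Real.exp L * (Real.exp (-(A * (2:ℝ)^(j+1))) * Real.exp (-L))
              = (Real.exp L * Real.exp (-L)) * Real.exp (-(A * (2:ℝ)^(j+1))) := by ring
            _ = Real.exp (-(A * (2:ℝ)^(j+1))) := by rw [hone]; ring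
        rwa [heq] at h4
      calc alphaF k γ 0 A (j+1+1) ≤ Real.exp (-(A * (2:ℝ)^(j+1+1))) * Real.exp L := h1
        _ = Real.exp (-(A * (2:ℝ)^(j+1))) * Real.exp (-(A * (2:ℝ)^(j+1))) * Real.exp L := by
            rw [he]
        _ ≤ (Real.exp L * alphaF k γ 0 A (j+1)) * Real.exp (-(A * (2:ℝ)^(j+1))) * Real.exp L := by
            apply mul_le_mul_of_nonneg_right
              (mul_le_mul_of_nonneg_right h3 (Real.exp_pos _).le) (Real.exp_pos _).le
        _ = (Real.exp L * Real.exp L) * Real.exp (-(A * (2:ℝ)^(j+1))) * alphaF k γ 0 A (j+1) := by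
            ring
    -- assemble
    have hfaF : aF k γ 0 A (j+1+1) ≤
        2 * ((2/cθ) * (zeta k γ 0 (j+1))⁻¹) *
          ((Real.exp L * Real.exp L) * Real.exp (-(A * (2:ℝ)^(j+1))) * alphaF k γ 0 A (j+1)) := by
      unfold aF
      apply mul_le_mul (by linarith [hZd] :
          2 * (zeta k γ 0 (j+1+1))⁻¹ ≤ 2 * ((2/cθ) * (zeta k γ 0 (j+1))⁻¹))
        hαd (hαpos _).le
        (by
          have := hZpos (j+1)
          positivity)
    have hp2j := two_zpow_pos (2*j)
    have hGp1 := hGpos (j+1)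
    have hGp2 := hGpos (j+1+1)
    have hsq : (2:ℝ)^(2*(j+1)) = 4 * (2:ℝ)^(2*j) := by
      rw [show (2*(j+1)) = 2*j + 2 by ring, zpow_add₀ h2ne]
      norm_num
      ring
    calc (2:ℝ)^(2*(j+1)) * γ ((2:ℝ)^(j+1+1)) * aF k γ 0 A (j+1+1)
        ≤ (2:ℝ)^(2*(j+1)) * ((4*Cγ/cγ) * γ ((2:ℝ)^(j+1))) * aF k γ 0 A (j+1+1) := by
          apply mul_le_mul_of_nonneg_right
            (mul_le_mul_of_nonneg_left hGd (two_zpow_pos _).le) (haFpos _).le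
      _ ≤ (2:ℝ)^(2*(j+1)) * ((4*Cγ/cγ) * γ ((2:ℝ)^(j+1))) *
          (2 * ((2/cθ) * (zeta k γ 0 (j+1))⁻¹) *
            ((Real.exp L * Real.exp L) * Real.exp (-(A * (2:ℝ)^(j+1))) * alphaF k γ 0 A (j+1))) := by
          apply mul_le_mul_of_nonneg_left hfaF
          positivity
      _ = (CR * Real.exp (-(A * (2:ℝ)^(j+1)))) *
          ((2:ℝ)^(2*j) * γ ((2:ℝ)^(j+1)) * aF k γ 0 A (j+1)) := by
          unfold aF
          rw [hsq, hCRdef]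
          ring
      _ ≤ (1/2) * ((2:ℝ)^(2*j) * γ ((2:ℝ)^(j+1)) * aF k γ 0 A (j+1)) := by
          apply mul_le_mul_of_nonneg_right hexp_small
          have := haFpos (j+1)
          positivity
  -- summability of the tail comparison sequence
  have htsum : Summable (fun n : ℤ => if 1 ≤ n then (γ ((2:ℝ)^n))⁻¹ else 0) := by
    apply Summable.of_nat_of_neg
    · have hg : Summable (fun m : ℕ => cγ⁻¹ * (1/2:ℝ)^m) :=
        Summable.mul_left _ (summable_geometric_of_lt_one (by norm_num) (by norm_num))
      apply hg.of_nonneg_of_le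
      · intro m
        by_cases h : (1:ℤ) ≤ (m:ℤ)
        · rw [if_pos h]
          exact inv_nonneg.mpr (hGpos _).le
        · rw [if_neg h]
      · intro m
        by_cases h : (1:ℤ) ≤ (m:ℤ)
        · rw [if_pos h]
          have h2 : cγ * (2:ℝ)^(m:ℤ) ≤ γ ((2:ℝ)^(m:ℤ)) := hG_lin (m:ℤ) (by positivity)
          have h3 : (γ ((2:ℝ)^(m:ℤ)))⁻¹ ≤ (cγ * (2:ℝ)^(m:ℤ))⁻¹ :=
            inv_anti₀ (by positivity) h2
          calc (γ ((2:ℝ)^(m:ℤ)))⁻¹ ≤ (cγ * (2:ℝ)^(m:ℤ))⁻¹ := h3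
            _ = cγ⁻¹ * (1/2:ℝ)^m := by
                rw [mul_inv, zpow_natCast, one_div, inv_pow]
        · rw [if_neg h]
          positivity
    · have hz : (fun m : ℕ => if (1:ℤ) ≤ (-(m:ℤ)) then (γ ((2:ℝ)^(-(m:ℤ))))⁻¹ else 0)
          = fun _ => (0:ℝ) := by
        funext m
        rw [if_neg (by omega)]
      rw [hz]
      exact summable_zero
  exact ⟨Cw, cv, hCw, hcv, hWneg, hVneg, hWsum, hVdec, htsum⟩


lemma core_ineq (W V t : ℤ → ℝ) (Cw cv : ℝ) (hCw : 0 < Cw) (hcv : 0 < cv)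
    (hWpos : ∀ n, 0 < W n) (hVpos : ∀ n, 0 < V n)
    (hWneg : ∀ n : ℤ, n ≤ 0 → W n ≤ Cw * 8^n)
    (hVneg : ∀ n : ℤ, n ≤ -1 → cv * 8^n ≤ V n)
    (hWsum : Summable W)
    (J₀ : ℕ) (hVdec : ∀ j : ℤ, (J₀:ℤ) ≤ j → V (j+1) ≤ (1/2) * V j)
    (htn : ∀ n : ℤ, 1 ≤ n → W n * (V (n-1))⁻¹ ≤ t n)
    (htnn : ∀ n, 0 ≤ t n) (htsum : Summable t) :
    ∃ c₀ : ℝ, 0 < c₀ ∧ ∀ y : ℤ → ℝ, Summable (fun n => W n * (y n)^2) →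
      Summable (fun n => V n * (y (n+1) - y n)^2) →
      (∑' n, W n * (y n - (∑' m, W m * y m)/(∑' m, W m))^2) ≤
        c₀ * ∑' n, V n * (y (n+1) - y n)^2 := by
  classical
  have hWnn : ∀ n, 0 ≤ W n := fun n => (hWpos n).le
  -- constants
  set K₁ : ℝ := ∑ j ∈ Finset.Ico (0:ℤ) (J₀:ℤ), (V j)⁻¹ with hK₁def
  have hK₁ : 0 ≤ K₁ := Finset.sum_nonneg (fun j _ => inv_nonneg.mpr (hVpos j).le)
  set CP : ℝ := cv⁻¹ * (4/3) with hCPdef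
  have hCP : 0 < CP := by rw [hCPdef]; positivity
  set b : ℤ → ℝ := fun n => K₁ * W n + 2 * t n with hbdef
  have hbnn : ∀ n, 0 ≤ b n := fun n => by
    have := hWnn n; have := htnn n
    rw [hbdef]; dsimp only; nlinarith [mul_nonneg hK₁ (hWnn n)]
  have hbsum : Summable b := by
    rw [hbdef]
    exact (hWsum.mul_left K₁).add (htsum.mul_left 2)
  set c₀ : ℝ := (∑' n, b n) + 2 * CP * Cw + 1 with hc₀def
  have hbts : 0 ≤ ∑' n, b n := tsum_nonneg hbnn
  have hc₀ : 0 < c₀ := by rw [hc₀def]; positivity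
  refine ⟨c₀, hc₀, ?_⟩
  intro y hy2 hRsum
  have hRnn : ∀ n, 0 ≤ V n * (y (n+1) - y n)^2 :=
    fun n => mul_nonneg (hVpos n).le (sq_nonneg _)
  set R : ℝ := ∑' n, V n * (y (n+1) - y n)^2 with hRdef
  have hR0 : 0 ≤ R := tsum_nonneg hRnn
  -- mean step
  have hWS : 0 < ∑' n, W n := Summable.tsum_pos hWsum hWnn 0 (hWpos 0)
  have hy1 : Summable (fun n => W n * y n) := by
    apply Summable.of_abs
    refine Summable.of_nonneg_of_le (fun n => abs_nonneg _) ?_ ((hWsum.add hy2).div_const 2)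
    intro n
    rw [abs_mul, abs_of_nonneg (hWnn n)]
    have h1 : |y n| ≤ (1 + (y n)^2)/2 := by nlinarith [sq_nonneg (|y n| - 1), sq_abs (y n)]
    have h2 := hWnn n
    calc W n * |y n| ≤ W n * ((1 + (y n)^2)/2) := mul_le_mul_of_nonneg_left h1 h2
      _ = (W n + W n * (y n)^2)/2 := by ring
  have hyc : ∀ c : ℝ, Summable (fun n => W n * (y n - c)^2) := by
    intro c
    have heq : (fun n => W n * (y n - c)^2)
        = fun n => (W n * (y n)^2 - (2*c) * (W n * y n)) + c^2 * W n := by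
      funext n; ring
    rw [heq]
    exact (hy2.sub (hy1.mul_left (2*c))).add (hWsum.mul_left (c^2))
  have hF : ∀ c : ℝ, (∑' n, W n * (y n - c)^2)
      = (∑' n, W n * (y n)^2) - (2*c) * (∑' n, W n * y n) + c^2 * (∑' n, W n) := by
    intro c
    have heq : (fun n => W n * (y n - c)^2)
        = fun n => (W n * (y n)^2 - (2*c) * (W n * y n)) + c^2 * W n := by
      funext n; ring
    rw [heq, Summable.tsum_add (hy2.sub (hy1.mul_left (2*c))) (hWsum.mul_left (c^2)),
      Summable.tsum_sub hy2 (hy1.mul_left (2*c)), tsum_mul_left, tsum_mul_left]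
  have hmean : (∑' n, W n * (y n - (∑' m, W m * y m)/(∑' m, W m))^2)
      ≤ ∑' n, W n * (y n - y 0)^2 := by
    rw [hF _, hF (y 0)]
    set P1 := ∑' n, W n * y n
    set WS := ∑' n, W n
    have hP1 : P1 / WS * WS = P1 := by field_simp
    have expand : (y 0 - P1/WS)^2 * WS = (y 0)^2*WS - 2*(y 0)*P1 + (P1/WS)*P1 := by
      have h : (y 0 - P1/WS)^2 * WS
          = (y 0)^2*WS - 2*(y 0)*(P1/WS*WS) + (P1/WS)*(P1/WS*WS) := by ring
      rw [hP1] at h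
      exact h
    have hq2 : (P1/WS)^2*WS = (P1/WS)*P1 := by
      have h : (P1/WS)^2*WS = (P1/WS)*(P1/WS*WS) := by ring
      rw [hP1] at h
      exact h
    linarith [mul_nonneg (sq_nonneg (y 0 - P1/WS)) hWS.le, expand, hq2]
  -- core finset bound
  have hcore : (∑' n, W n * (y n - y 0)^2) ≤ c₀ * R := by
    apply Summable.tsum_le_of_sum_le (hyc (y 0))
    intro F
    set N : ℕ := F.sup (fun n => n.natAbs) with hNdef
    have hFsub : F ⊆ Finset.Icc (-(N:ℤ)) (N:ℤ) := by
      intro n hn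
      have h2 : n.natAbs ≤ N := Finset.le_sup (f := fun n : ℤ => n.natAbs) hn
      simp only [Finset.mem_Icc]
      omega
    have hterm : ∀ n, 0 ≤ W n * (y n - y 0)^2 := fun n => mul_nonneg (hWnn n) (sq_nonneg _)
    have h1 : ∑ n ∈ F, W n * (y n - y 0)^2 ≤
        ∑ n ∈ Finset.Icc (-(N:ℤ)) (N:ℤ), W n * (y n - y 0)^2 :=
      Finset.sum_le_sum_of_subset_of_nonneg hFsub (fun n _ _ => hterm n)
    have hsplit : Finset.Icc (-(N:ℤ)) (N:ℤ)
        = Finset.Icc (-(N:ℤ)) (-1) ∪ Finset.Icc 0 (N:ℤ) := by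
      ext i
      simp only [Finset.mem_Icc, Finset.mem_union]
      omega
    have hdisj : Disjoint (Finset.Icc (-(N:ℤ)) (-1)) (Finset.Icc 0 (N:ℤ)) := by
      rw [Finset.disjoint_left]
      intro a ha hb
      simp only [Finset.mem_Icc] at ha hb
      omega
    -- Cauchy–Schwarz, negative side
    have hQnn : ∀ j, (0:ℝ) ≤ (2:ℝ)^(-j) * V j * (y (j+1) - y j)^2 :=
      fun j => mul_nonneg (mul_nonneg (zpow_pos (by norm_num : (0:ℝ) < 2) _).le (hVpos j).le)
        (sq_nonneg _)
    have hCSneg : ∀ n : ℤ, n ≤ -1 → (y n - y 0)^2 ≤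
        (∑ i ∈ Finset.Ico n 0, (2:ℝ)^i * (V i)⁻¹) *
          (∑ j ∈ Finset.Ico n 0, (2:ℝ)^(-j) * V j * (y (j+1) - y j)^2) := by
      intro n hn
      have htel : (∑ i ∈ Finset.Ico n 0, (y (i+1) - y i)) = y 0 - y n := tele y n 0 (by omega)
      have hCS := Finset.sum_sq_le_sum_mul_sum_of_sq_eq_mul (Finset.Ico n 0)
        (f := fun i => (2:ℝ)^i * (V i)⁻¹)
        (g := fun j => (2:ℝ)^(-j) * V j * (y (j+1) - y j)^2)
        (r := fun i => y (i+1) - y i)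
        (fun i _ => mul_nonneg (zpow_pos (by norm_num : (0:ℝ) < 2) _).le
          (inv_nonneg.mpr (hVpos i).le))
        (fun i _ => hQnn i)
        (fun i _ => by
          have hvi := (hVpos i).ne'
          have h2i : (2:ℝ)^i * (2:ℝ)^(-i) = 1 := by
            rw [← zpow_add₀ (by norm_num : (2:ℝ) ≠ 0)]
            simp
          field_simp
          linear_combination (-(y (i+1) - y i)^2) * h2i)
      rw [htel] at hCS
      calc (y n - y 0)^2 = (y 0 - y n)^2 := by ring
        _ ≤ _ := hCS
    have hPn : ∀ n : ℤ, n ≤ -1 →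
        (∑ i ∈ Finset.Ico n 0, (2:ℝ)^i * (V i)⁻¹) ≤ CP * (4:ℝ)^(-n) := by
      intro n hn
      have hIco : Finset.Ico n (0:ℤ) = Finset.Icc n (-1) := by
        ext i; simp only [Finset.mem_Ico, Finset.mem_Icc]; omega
      have hstep : ∀ i ∈ Finset.Icc n (-1), (2:ℝ)^i * (V i)⁻¹ ≤ cv⁻¹ * (1/4:ℝ)^i := by
        intro i hi
        simp only [Finset.mem_Icc] at hi
        have hVi := hVneg i hi.2
        have h8p : (0:ℝ) < cv * 8^i := by positivity
        have hinv : (V i)⁻¹ ≤ (cv * 8^i)⁻¹ := inv_anti₀ h8p hVi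
        have h2p : (0:ℝ) ≤ (2:ℝ)^i := (zpow_pos (by norm_num : (0:ℝ) < 2) _).le
        calc (2:ℝ)^i * (V i)⁻¹ ≤ (2:ℝ)^i * (cv * 8^i)⁻¹ :=
              mul_le_mul_of_nonneg_left hinv h2p
          _ = cv⁻¹ * (1/4:ℝ)^i := by
              rw [mul_inv]
              rw [show ((8:ℝ)) = 2*4 by norm_num, mul_zpow, mul_inv]
              rw [show ((1/4:ℝ)) = (4:ℝ)⁻¹ by norm_num, inv_zpow]
              have h2z : (2:ℝ)^i * ((2:ℝ)^i)⁻¹ = 1 := by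
                field_simp
              field_simp
      calc (∑ i ∈ Finset.Ico n 0, (2:ℝ)^i * (V i)⁻¹)
          = ∑ i ∈ Finset.Icc n (-1), (2:ℝ)^i * (V i)⁻¹ := by rw [hIco]
        _ ≤ ∑ i ∈ Finset.Icc n (-1), cv⁻¹ * (1/4:ℝ)^i := Finset.sum_le_sum hstep
        _ = cv⁻¹ * ∑ i ∈ Finset.Icc n (-1), (1/4:ℝ)^i := by rw [Finset.mul_sum]
        _ ≤ cv⁻¹ * ((1/4:ℝ)^n / (1 - 1/4)) := by
            apply mul_le_mul_of_nonneg_left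
              (geo_lt_one (1/4) (by norm_num) (by norm_num) n (-1)) (by positivity)
        _ = CP * (4:ℝ)^(-n) := by
            rw [hCPdef, show ((1/4:ℝ)) = (4:ℝ)⁻¹ by norm_num, inv_zpow, ← zpow_neg]
            ring
    -- negative part
    have hneg : ∑ n ∈ Finset.Icc (-(N:ℤ)) (-1), W n * (y n - y 0)^2 ≤ 2 * CP * Cw * R := by
      have hstep1 : ∀ n ∈ Finset.Icc (-(N:ℤ)) (-1), W n * (y n - y 0)^2 ≤
          (CP * W n * (4:ℝ)^(-n)) *
            (∑ j ∈ Finset.Ico n 0, (2:ℝ)^(-j) * V j * (y (j+1) - y j)^2) := by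
        intro n hn
        simp only [Finset.mem_Icc] at hn
        have h2 := hCSneg n hn.2
        have h3 := hPn n hn.2
        have hQ : 0 ≤ ∑ j ∈ Finset.Ico n 0, (2:ℝ)^(-j) * V j * (y (j+1) - y j)^2 :=
          Finset.sum_nonneg (fun j _ => hQnn j)
        calc W n * (y n - y 0)^2
            ≤ W n * ((∑ i ∈ Finset.Ico n 0, (2:ℝ)^i * (V i)⁻¹) *
                (∑ j ∈ Finset.Ico n 0, (2:ℝ)^(-j) * V j * (y (j+1) - y j)^2)) :=
              mul_le_mul_of_nonneg_left h2 (hWnn n)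
          _ ≤ W n * ((CP * (4:ℝ)^(-n)) *
                (∑ j ∈ Finset.Ico n 0, (2:ℝ)^(-j) * V j * (y (j+1) - y j)^2)) := by
              apply mul_le_mul_of_nonneg_left (mul_le_mul_of_nonneg_right h3 hQ) (hWnn n)
          _ = (CP * W n * (4:ℝ)^(-n)) *
                (∑ j ∈ Finset.Ico n 0, (2:ℝ)^(-j) * V j * (y (j+1) - y j)^2) := by ring
      have h4 : ∑ n ∈ Finset.Icc (-(N:ℤ)) (-1), W n * (y n - y 0)^2 ≤
          ∑ n ∈ Finset.Icc (-(N:ℤ)) (-1), (CP * W n * (4:ℝ)^(-n)) *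
            (∑ j ∈ Finset.Ico n 0, (2:ℝ)^(-j) * V j * (y (j+1) - y j)^2) :=
        Finset.sum_le_sum hstep1
      rw [tri_swap N (fun n => CP * W n * (4:ℝ)^(-n))
        (fun j => (2:ℝ)^(-j) * V j * (y (j+1) - y j)^2)] at h4
      have hinner : ∀ j ∈ Finset.Icc (-(N:ℤ)) (-1),
          (∑ n ∈ Finset.Icc (-(N:ℤ)) j, CP * W n * (4:ℝ)^(-n)) *
            ((2:ℝ)^(-j) * V j * (y (j+1) - y j)^2)
          ≤ (2 * CP * Cw) * (V j * (y (j+1) - y j)^2) := by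
        intro j hj
        simp only [Finset.mem_Icc] at hj
        have hin : (∑ n ∈ Finset.Icc (-(N:ℤ)) j, CP * W n * (4:ℝ)^(-n))
            ≤ CP * Cw * (2:ℝ)^(j+1) := by
          have hs : ∀ n ∈ Finset.Icc (-(N:ℤ)) j, CP * W n * (4:ℝ)^(-n) ≤ CP * Cw * (2:ℝ)^n := by
            intro n hn
            simp only [Finset.mem_Icc] at hn
            have hW := hWneg n (by omega)
            have h4p : (0:ℝ) < (4:ℝ)^(-n) := zpow_pos (by norm_num) _
            have key : W n * (4:ℝ)^(-n) ≤ Cw * (2:ℝ)^n := by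
              have h8 : (8:ℝ)^n * (4:ℝ)^(-n) = (2:ℝ)^n := by
                rw [show ((8:ℝ)) = 2*4 by norm_num, mul_zpow, zpow_neg]
                have h4ne : ((4:ℝ)^n) ≠ 0 := (zpow_pos (by norm_num : (0:ℝ) < 4) n).ne'
                field_simp
              calc W n * (4:ℝ)^(-n) ≤ (Cw * 8^n) * (4:ℝ)^(-n) :=
                    mul_le_mul_of_nonneg_right hW h4p.le
                _ = Cw * ((8:ℝ)^n * (4:ℝ)^(-n)) := by ring
                _ = Cw * (2:ℝ)^n := by rw [h8]
            calc CP * W n * (4:ℝ)^(-n) = CP * (W n * (4:ℝ)^(-n)) := by ring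
              _ ≤ CP * (Cw * (2:ℝ)^n) := mul_le_mul_of_nonneg_left key hCP.le
              _ = CP * Cw * (2:ℝ)^n := by ring
          calc (∑ n ∈ Finset.Icc (-(N:ℤ)) j, CP * W n * (4:ℝ)^(-n))
              ≤ ∑ n ∈ Finset.Icc (-(N:ℤ)) j, CP * Cw * (2:ℝ)^n := Finset.sum_le_sum hs
            _ = CP * Cw * ∑ n ∈ Finset.Icc (-(N:ℤ)) j, (2:ℝ)^n := by rw [Finset.mul_sum]
            _ ≤ CP * Cw * ((2:ℝ)^(j+1) / (2 - 1)) := by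
                apply mul_le_mul_of_nonneg_left (geo_gt_one 2 (by norm_num) _ _) (by positivity)
            _ = CP * Cw * (2:ℝ)^(j+1) := by norm_num
        have hq := hQnn j
        have h2j : (2:ℝ)^(j+1) * (2:ℝ)^(-j) = 2 := by
          rw [← zpow_add₀ (by norm_num : (2:ℝ) ≠ 0)]
          norm_num
        calc (∑ n ∈ Finset.Icc (-(N:ℤ)) j, CP * W n * (4:ℝ)^(-n)) *
              ((2:ℝ)^(-j) * V j * (y (j+1) - y j)^2)
            ≤ (CP * Cw * (2:ℝ)^(j+1)) * ((2:ℝ)^(-j) * V j * (y (j+1) - y j)^2) :=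
              mul_le_mul_of_nonneg_right hin hq
          _ = (CP * Cw) * ((2:ℝ)^(j+1) * (2:ℝ)^(-j)) * (V j * (y (j+1) - y j)^2) := by ring
          _ = (2 * CP * Cw) * (V j * (y (j+1) - y j)^2) := by rw [h2j]; ring
      have h5 : ∑ j ∈ Finset.Icc (-(N:ℤ)) (-1),
            (∑ n ∈ Finset.Icc (-(N:ℤ)) j, CP * W n * (4:ℝ)^(-n)) *
              ((2:ℝ)^(-j) * V j * (y (j+1) - y j)^2)
          ≤ (2 * CP * Cw) * ∑ j ∈ Finset.Icc (-(N:ℤ)) (-1), V j * (y (j+1) - y j)^2 := by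
        rw [Finset.mul_sum]
        exact Finset.sum_le_sum hinner
      have h6 : ∑ j ∈ Finset.Icc (-(N:ℤ)) (-1), V j * (y (j+1) - y j)^2 ≤ R :=
        Summable.sum_le_tsum _ (fun j _ => hRnn j) hRsum
      calc ∑ n ∈ Finset.Icc (-(N:ℤ)) (-1), W n * (y n - y 0)^2 ≤ _ := h4
        _ ≤ (2 * CP * Cw) * ∑ j ∈ Finset.Icc (-(N:ℤ)) (-1), V j * (y (j+1) - y j)^2 := h5
        _ ≤ 2 * CP * Cw * R := mul_le_mul_of_nonneg_left h6 (by positivity)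
    -- positive part
    have hpos : ∑ n ∈ Finset.Icc (0:ℤ) (N:ℤ), W n * (y n - y 0)^2 ≤ (∑' n, b n) * R := by
      have hdec2 : ∀ (j : ℤ), (J₀:ℤ) ≤ j → ∀ m : ℕ, V (j + m) ≤ (1/2:ℝ)^m * V j := by
        intro j hj m
        induction m with
        | zero => simp
        | succ m ih =>
          have h1' := hVdec (j + m) (by omega)
          have h2' : (j + (m:ℤ)) + 1 = j + ((m+1 : ℕ):ℤ) := by push_cast; ring
          rw [h2'] at h1'
          calc V (j + ((m+1 : ℕ):ℤ)) ≤ 1/2 * V (j + (m:ℤ)) := h1'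
            _ ≤ 1/2 * ((1/2:ℝ)^m * V j) := by
                apply mul_le_mul_of_nonneg_left ih (by norm_num)
            _ = (1/2:ℝ)^(m+1) * V j := by rw [pow_succ]; ring
      have hBn : ∀ n : ℤ, 1 ≤ n →
          (∑ j ∈ Finset.Ico (0:ℤ) n, (V j)⁻¹) ≤ K₁ + 2 * (V (n-1))⁻¹ := by
        intro n hn
        rcases le_or_gt n (J₀:ℤ) with hc | hc
        · have hsub2 : Finset.Ico (0:ℤ) n ⊆ Finset.Ico (0:ℤ) (J₀:ℤ) :=
            Finset.Ico_subset_Ico le_rfl hc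
          have hle : (∑ j ∈ Finset.Ico (0:ℤ) n, (V j)⁻¹) ≤ K₁ := by
            rw [hK₁def]
            exact Finset.sum_le_sum_of_subset_of_nonneg hsub2
              (fun j _ _ => inv_nonneg.mpr (hVpos j).le)
          have h2' : (0:ℝ) ≤ (V (n-1))⁻¹ := inv_nonneg.mpr (hVpos _).le
          linarith
        · have hsplit2 : Finset.Ico (0:ℤ) n
              = Finset.Ico (0:ℤ) (J₀:ℤ) ∪ Finset.Icc (J₀:ℤ) (n-1) := by
            ext i
            simp only [Finset.mem_Ico, Finset.mem_union, Finset.mem_Icc]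
            omega
          have hdisj2 : Disjoint (Finset.Ico (0:ℤ) (J₀:ℤ)) (Finset.Icc (J₀:ℤ) (n-1)) := by
            rw [Finset.disjoint_left]
            intro a ha hb
            simp only [Finset.mem_Ico, Finset.mem_Icc] at ha hb
            omega
          rw [hsplit2, Finset.sum_union hdisj2]
          have hsecond : (∑ j ∈ Finset.Icc (J₀:ℤ) (n-1), (V j)⁻¹) ≤ 2 * (V (n-1))⁻¹ := by
            have hterm2 : ∀ j ∈ Finset.Icc (J₀:ℤ) (n-1),
                (V j)⁻¹ ≤ (2:ℝ)^(j-(n-1)) * (V (n-1))⁻¹ := by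
              intro j hj
              simp only [Finset.mem_Icc] at hj
              have hm : n - 1 = j + ((n-1-j).toNat : ℤ) := by omega
              have hd := hdec2 j hj.1 ((n-1-j).toNat)
              rw [← hm] at hd
              have hq : ((1/2:ℝ)^((n-1-j).toNat)) = (2:ℝ)^(j-(n-1)) := by
                rw [one_div, inv_pow, ← zpow_natCast, ← zpow_neg]
                congr 1
                omega
              rw [hq] at hd
              have hVn1 := hVpos (n-1)
              have h2p : (0:ℝ) < (2:ℝ)^(j-(n-1)) := zpow_pos (by norm_num) _
              have h7 := inv_anti₀ hVn1 hd
              rw [mul_inv] at h7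
              have h8' := mul_le_mul_of_nonneg_left h7 h2p.le
              rw [← mul_assoc, mul_inv_cancel₀ h2p.ne', one_mul] at h8'
              exact h8'
            have hd1 : (2:ℝ)^((n:ℤ)-1+1) / (2-1) = (2:ℝ)^n := by
              rw [show ((n:ℤ)-1+1) = n by ring]
              norm_num
            have hd2 : (2:ℝ)^(-((n:ℤ)-1)) * (2:ℝ)^(n:ℤ) = 2 := by
              rw [← zpow_add₀ (by norm_num : (2:ℝ) ≠ 0),
                show (-((n:ℤ)-1) + n) = 1 by ring]
              norm_num
            calc (∑ j ∈ Finset.Icc (J₀:ℤ) (n-1), (V j)⁻¹)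
                ≤ ∑ j ∈ Finset.Icc (J₀:ℤ) (n-1), (2:ℝ)^(j-(n-1)) * (V (n-1))⁻¹ :=
                  Finset.sum_le_sum hterm2
              _ = (2:ℝ)^(-((n:ℤ)-1)) * (V (n-1))⁻¹ * ∑ j ∈ Finset.Icc (J₀:ℤ) (n-1), (2:ℝ)^j := by
                  rw [Finset.mul_sum]
                  refine Finset.sum_congr rfl (fun j _ => ?_)
                  rw [show (j-((n:ℤ)-1)) = -((n:ℤ)-1)+j by ring,
                    zpow_add₀ (by norm_num : (2:ℝ) ≠ 0)]
                  ring
              _ ≤ (2:ℝ)^(-((n:ℤ)-1)) * (V (n-1))⁻¹ * ((2:ℝ)^((n:ℤ)-1+1) / (2-1)) := by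
                  apply mul_le_mul_of_nonneg_left (geo_gt_one 2 (by norm_num) _ _)
                    (by have := hVpos (n-1); positivity)
              _ = ((2:ℝ)^(-((n:ℤ)-1)) * (2:ℝ)^(n:ℤ)) * (V (n-1))⁻¹ := by
                  rw [hd1]
                  ring
              _ = 2 * (V (n-1))⁻¹ := by rw [hd2]
          have hfirst : (∑ j ∈ Finset.Ico (0:ℤ) (J₀:ℤ), (V j)⁻¹) = K₁ := by rw [hK₁def]
          linarith
      have hposn : ∀ n ∈ Finset.Icc (0:ℤ) (N:ℤ), W n * (y n - y 0)^2 ≤ b n * R := by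
        intro n hn
        simp only [Finset.mem_Icc] at hn
        rcases eq_or_lt_of_le hn.1 with h0 | h0
        · rw [← h0]
          simp only [sub_self, ne_eq, OfNat.ofNat_ne_zero, not_false_eq_true, zero_pow, mul_zero]
          exact mul_nonneg (hbnn 0) hR0
        · have hn1 : (1:ℤ) ≤ n := h0
          have hCS2 := Finset.sum_sq_le_sum_mul_sum_of_sq_eq_mul (Finset.Ico (0:ℤ) n)
            (f := fun j => (V j)⁻¹) (g := fun j => V j * (y (j+1) - y j)^2)
            (r := fun j => y (j+1) - y j)
            (fun j _ => inv_nonneg.mpr (hVpos j).le) (fun j _ => hRnn j)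
            (fun j _ => by
              have hne := (hVpos j).ne'
              field_simp)
          rw [tele y 0 n (by omega)] at hCS2
          have hQ2 : (∑ j ∈ Finset.Ico (0:ℤ) n, V j * (y (j+1) - y j)^2) ≤ R :=
            Summable.sum_le_tsum _ (fun j _ => hRnn j) hRsum
          have hB := hBn n hn1
          have hBnn' : 0 ≤ ∑ j ∈ Finset.Ico (0:ℤ) n, (V j)⁻¹ :=
            Finset.sum_nonneg (fun j _ => inv_nonneg.mpr (hVpos j).le)
          calc W n * (y n - y 0)^2
              ≤ W n * ((∑ j ∈ Finset.Ico (0:ℤ) n, (V j)⁻¹) *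
                  (∑ j ∈ Finset.Ico (0:ℤ) n, V j * (y (j+1) - y j)^2)) :=
                mul_le_mul_of_nonneg_left hCS2 (hWnn n)
            _ ≤ W n * ((∑ j ∈ Finset.Ico (0:ℤ) n, (V j)⁻¹) * R) := by
                apply mul_le_mul_of_nonneg_left (mul_le_mul_of_nonneg_left hQ2 hBnn') (hWnn n)
            _ = (W n * (∑ j ∈ Finset.Ico (0:ℤ) n, (V j)⁻¹)) * R := by ring
            _ ≤ (W n * (K₁ + 2*(V (n-1))⁻¹)) * R :=
                mul_le_mul_of_nonneg_right (mul_le_mul_of_nonneg_left hB (hWnn n)) hR0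
            _ ≤ b n * R := by
                apply mul_le_mul_of_nonneg_right _ hR0
                rw [hbdef]
                dsimp only
                have h9 := htn n hn1
                nlinarith [hWnn n, mul_nonneg hK₁ (hWnn n)]
      calc ∑ n ∈ Finset.Icc (0:ℤ) (N:ℤ), W n * (y n - y 0)^2
          ≤ ∑ n ∈ Finset.Icc (0:ℤ) (N:ℤ), b n * R := Finset.sum_le_sum hposn
        _ = (∑ n ∈ Finset.Icc (0:ℤ) (N:ℤ), b n) * R := by rw [← Finset.sum_mul]
        _ ≤ (∑' n, b n) * R :=
            mul_le_mul_of_nonneg_right (Summable.sum_le_tsum _ (fun n _ => hbnn n) hbsum) hR0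
    calc ∑ n ∈ F, W n * (y n - y 0)^2
        ≤ ∑ n ∈ Finset.Icc (-(N:ℤ)) (N:ℤ), W n * (y n - y 0)^2 := h1
      _ = ∑ n ∈ Finset.Icc (-(N:ℤ)) (-1), W n * (y n - y 0)^2
          + ∑ n ∈ Finset.Icc (0:ℤ) (N:ℤ), W n * (y n - y 0)^2 := by
          rw [hsplit, Finset.sum_union hdisj]
      _ ≤ 2 * CP * Cw * R + (∑' n, b n) * R := add_le_add hneg hpos
      _ ≤ c₀ * R := by
          rw [hc₀def]
          nlinarith [hR0]
  calc (∑' n, W n * (y n - (∑' m, W m * y m)/(∑' m, W m))^2)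
      ≤ ∑' n, W n * (y n - y 0)^2 := hmean
    _ ≤ c₀ * R := hcore


/-- discrete weighted Poincaré inequality.
With `a_n = a_n(A_M)`, there is `c₀ > 0` depending only on `M` (and the kernels) such that for
every sequence `y` with `Σ 2^{2n} a_n y_n² < ∞`, setting `ȳ = (Σ 2^{2n} a_n y_n)/(Σ 2^{2n} a_n)`,
`Σ 2^{2n} a_n (y_n − ȳ)² ≤ c₀ Σ 2^{2n} γ(2^{n+1}) a_{n+1} (y_{n+1} − y_n)²`
(the right-hand side being possibly infinite, both sides are computed in `ℝ≥0∞`). -/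
theorem stmt7
    (α β αb βb k₀ γ₀ : ℝ)
    (hα : α ∈ Set.Ioo (0:ℝ) 1) (hβ : β ∈ Set.Ioo (1:ℝ) 2)
    (hαb : 1 < αb) (hβb : 1 < βb) (hk₀ : 0 < k₀) (hγ₀ : 0 < γ₀)
    (k γ : ℝ → ℝ)
    (hk_cont : ContinuousOn k (Set.Ici 0)) (hk_pos : ∀ ξ : ℝ, 0 ≤ ξ → 0 < k ξ)
    (hk_inf : Tendsto (fun ξ : ℝ => k ξ / ξ ^ (α + 1)) atTop (𝓝 1))
    (hk_0 : (fun ξ : ℝ => k ξ - k₀) =O[𝓝[>] 0] fun ξ : ℝ => ξ ^ αb)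
    (hγ_cont : ContinuousOn γ (Set.Ioi 0)) (hγ_pos : ∀ ξ : ℝ, 0 < ξ → 0 < γ ξ)
    (hγ_inf : Tendsto (fun ξ : ℝ => γ ξ / ξ ^ β) atTop (𝓝 1))
    (hγ_0 : (fun ξ : ℝ => γ ξ - γ₀) =O[𝓝[>] 0] fun ξ : ℝ => ξ ^ βb)
    (M : ℝ) (hM : 0 < M) (A_M : ℝ) (hAM_pos : 0 < A_M)
    (hAM_sum : Summable (fun n : ℤ => (2:ℝ) ^ n * aF k γ 0 A_M n))
    (hAM : (∑' n : ℤ, (2:ℝ) ^ n * aF k γ 0 A_M n) = M)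
    :
    ∃ c₀ > (0:ℝ), ∀ y : ℤ → ℝ,
      Summable (fun n : ℤ => (2:ℝ) ^ (2 * n) * aF k γ 0 A_M n * (y n) ^ 2) →
      (∑' n : ℤ, ENNReal.ofReal
          ((2:ℝ) ^ (2 * n) * aF k γ 0 A_M n *
            (y n -
              (∑' m : ℤ, (2:ℝ) ^ (2 * m) * aF k γ 0 A_M m * y m) /
                (∑' m : ℤ, (2:ℝ) ^ (2 * m) * aF k γ 0 A_M m)) ^ 2)) ≤
        ENNReal.ofReal c₀ *
          ∑' n : ℤ, ENNReal.ofReal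
            ((2:ℝ) ^ (2 * n) * γ ((2:ℝ) ^ (n + 1)) * aF k γ 0 A_M (n + 1) *
              (y (n + 1) - y n) ^ 2) := by
  classical
  obtain ⟨ck, Ck, hck, hkenv⟩ := k_envelope α hα k hk_cont hk_pos hk_inf
  obtain ⟨cγ, Cγ, hcγ, hγenv⟩ := γ_envelope β βb γ₀ hβ hβb hγ₀ γ hγ_cont hγ_pos hγ_inf hγ_0
  obtain ⟨Cw, cv, hCw, hcv, hWneg, hVneg, hWsum, ⟨J₀, hJdec⟩, htsum0⟩ :=
    weight_pack α β hα hβ k γ hk_pos hγ_pos ck Ck cγ Cγ hck hcγ hkenv hγenv A_M hAM_pos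
  set W : ℤ → ℝ := fun n => (2:ℝ)^(2*n) * aF k γ 0 A_M n with hWdef
  set V : ℤ → ℝ := fun n => (2:ℝ)^(2*n) * γ ((2:ℝ)^(n+1)) * aF k γ 0 A_M (n+1) with hVdef
  set t : ℤ → ℝ := fun n => if 1 ≤ n then 4 * (γ ((2:ℝ)^n))⁻¹ else 0 with htdef
  have haFpos : ∀ m : ℤ, 0 < aF k γ 0 A_M m := by
    intro m
    unfold aF
    have h1 := zeta_pos k γ hk_pos hγ_pos m
    have h2 : 0 < alphaF k γ 0 A_M m := mul_pos (Real.exp_pos _) (Real.exp_pos _)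
    positivity
  have hGpos : ∀ m : ℤ, 0 < γ ((2:ℝ)^m) := fun m => hγ_pos _ (two_zpow_pos m)
  have hWpos : ∀ n, 0 < W n := by
    intro n
    rw [hWdef]
    have := haFpos n
    have := two_zpow_pos (2*n)
    positivity
  have hVpos : ∀ n, 0 < V n := by
    intro n
    rw [hVdef]
    have := haFpos (n+1)
    have := hGpos (n+1)
    have := two_zpow_pos (2*n)
    positivity
  have htn : ∀ n : ℤ, 1 ≤ n → W n * (V (n-1))⁻¹ ≤ t n := by
    intro n hn
    rw [htdef]
    dsimp only
    rw [if_pos hn, hWdef, hVdef]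
    dsimp only
    rw [show ((n:ℤ)-1+1) = n by ring]
    have ha := (haFpos n).ne'
    have hg := (hGpos n).ne'
    have hp1 : ((2:ℝ)^(2*(n-1))) ≠ 0 := (two_zpow_pos _).ne'
    have hp2 : ((2:ℝ)^(2*n)) ≠ 0 := (two_zpow_pos _).ne'
    have h4 : (2:ℝ)^(2*n) = 4 * (2:ℝ)^(2*(n-1)) := by
      rw [show (2*n) = 2*(n-1)+2 by ring, zpow_add₀ (by norm_num : (2:ℝ) ≠ 0)]
      norm_num
      ring
    rw [h4]
    apply le_of_eq
    field_simp
  have htnn : ∀ n, 0 ≤ t n := by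
    intro n
    rw [htdef]
    dsimp only
    split_ifs with h
    · have := hGpos n
      positivity
    · exact le_refl 0
  have htsum : Summable t := by
    have heq : t = fun n => 4 * (if 1 ≤ n then (γ ((2:ℝ)^n))⁻¹ else 0) := by
      funext n
      rw [htdef]
      dsimp only
      split_ifs <;> ring
    rw [heq]
    exact htsum0.mul_left 4
  obtain ⟨c₀, hc₀, hcore⟩ := core_ineq W V t Cw cv hCw hcv hWpos hVpos
    (fun n hn => hWneg n hn) (fun n hn => hVneg n hn) hWsum J₀
    (fun j hj => hJdec j hj) htn htnn htsum
  refine ⟨c₀, hc₀, ?_⟩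
  intro y hy2
  set ybar : ℝ := (∑' m : ℤ, (2:ℝ)^(2*m) * aF k γ 0 A_M m * y m) /
      (∑' m : ℤ, (2:ℝ)^(2*m) * aF k γ 0 A_M m) with hybardef
  -- summability of the LHS real series
  have hy2' : Summable (fun n => W n * (y n)^2) := hy2
  have hy1 : Summable (fun n => W n * y n) := by
    apply Summable.of_abs
    refine Summable.of_nonneg_of_le (fun n => abs_nonneg _) ?_ ((hWsum.add hy2').div_const 2)
    intro n
    rw [abs_mul, abs_of_nonneg (hWpos n).le]
    have h1 : |y n| ≤ (1 + (y n)^2)/2 := by nlinarith [sq_nonneg (|y n| - 1), sq_abs (y n)]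
    have h2 := (hWpos n).le
    calc W n * |y n| ≤ W n * ((1 + (y n)^2)/2) := mul_le_mul_of_nonneg_left h1 h2
      _ = (W n + W n * (y n)^2)/2 := by ring
  have hyL : Summable (fun n => W n * (y n - ybar)^2) := by
    have heq : (fun n => W n * (y n - ybar)^2)
        = fun n => (W n * (y n)^2 - (2*ybar) * (W n * y n)) + ybar^2 * W n := by
      funext n; ring
    rw [heq]
    exact (hy2'.sub (hy1.mul_left (2*ybar))).add (hWsum.mul_left (ybar^2))
  have hLnn : ∀ n, 0 ≤ W n * (y n - ybar)^2 := fun n => mul_nonneg (hWpos n).le (sq_nonneg _)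
  have hRnn : ∀ n, 0 ≤ V n * (y (n+1) - y n)^2 := fun n => mul_nonneg (hVpos n).le (sq_nonneg _)
  have hLHS : (∑' n : ℤ, ENNReal.ofReal
      ((2:ℝ) ^ (2 * n) * aF k γ 0 A_M n * (y n - ybar) ^ 2))
      = ENNReal.ofReal (∑' n, W n * (y n - ybar)^2) :=
    (ENNReal.ofReal_tsum_of_nonneg hLnn hyL).symm
  by_cases hRS : Summable (fun n => V n * (y (n+1) - y n)^2)
  · have hRHS : (∑' n : ℤ, ENNReal.ofReal
        ((2:ℝ) ^ (2 * n) * γ ((2:ℝ) ^ (n + 1)) * aF k γ 0 A_M (n + 1) * (y (n + 1) - y n) ^ 2))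
        = ENNReal.ofReal (∑' n, V n * (y (n+1) - y n)^2) :=
      (ENNReal.ofReal_tsum_of_nonneg hRnn hRS).symm
    rw [hLHS, hRHS, ← ENNReal.ofReal_mul hc₀.le]
    exact ENNReal.ofReal_le_ofReal (hcore y hy2' hRS)
  · have hTop : (∑' n : ℤ, ENNReal.ofReal
        ((2:ℝ) ^ (2 * n) * γ ((2:ℝ) ^ (n + 1)) * aF k γ 0 A_M (n + 1) * (y (n + 1) - y n) ^ 2))
        = ⊤ := by
      by_contra hne
      apply hRS
      have h1 : Summable (fun n : ℤ => (V n * (y (n+1) - y n)^2).toNNReal) := by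
        rw [← ENNReal.tsum_coe_ne_top_iff_summable]
        exact hne
      have h2 := NNReal.summable_coe.mpr h1
      have h3 : (fun n : ℤ => ((V n * (y (n+1) - y n)^2).toNNReal : ℝ))
          = fun n => V n * (y (n+1) - y n)^2 := by
        funext n
        exact Real.coe_toNNReal _ (hRnn n)
      rwa [h3] at h2
    rw [hLHS, hTop, ENNReal.mul_top (by
      simp only [ne_eq, ENNReal.ofReal_eq_zero, not_le]
      exact hc₀)]
    exact le_top

end
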